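/- arXiv:2301.03175 — 8 statements merged into one kernel-verified Lean document; each statement's English description precedes it below -/
import Mathlib

section
/- Let f be a proper closed convex function on ℝⁿ with minimizer x*, and suppose ‖x_0 − x*‖ ≤ R. Let x_i = prox_{α_i f}(x_{i−1}) for i = 1, ..., N with positive step sizes α_i. Then the vector g_N = (x_{N−1} − x_N)/α_N is a subgradient of f at x_N and satisfies ‖g_N‖ ≤ R / (α_1 + ... + α_N). -/
open scoped RealInnerProductSpace

/-- `g` is a subgradient of `f` at `y`. -/
def SubgradAt {n : ℕ} (f : EuclideanSpace ℝ (Fin n) → ℝ)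
    (g y : EuclideanSpace ℝ (Fin n)) : Prop :=
  ∀ z, f y + ⟪g, z - y⟫ ≤ f z

private lemma norm_le_of_sq_le_inner {n : ℕ} (u v : EuclideanSpace ℝ (Fin n))
    (h : ‖v‖ ^ 2 ≤ ⟪u, v⟫) : ‖v‖ ≤ ‖u‖ := by
  have hcs := real_inner_le_norm u v
  rcases (norm_nonneg v).eq_or_lt.imp Eq.symm id with h0 | h0
  · rw [h0]; exact norm_nonneg u
  · have h2 : ‖v‖ * ‖v‖ ≤ ‖u‖ * ‖v‖ := by nlinarith
    exact le_of_mul_le_mul_right h2 h0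

private lemma prox_subgrad {n : ℕ} {f : EuclideanSpace ℝ (Fin n) → ℝ}
    (hconv : ConvexOn ℝ Set.univ f) {a : ℝ} (ha : 0 < a)
    {xp y : EuclideanSpace ℝ (Fin n)}
    (hmin : IsMinOn (fun z => a * f z + ‖z - xp‖ ^ 2 / 2) Set.univ y) :
    SubgradAt f (a⁻¹ • (xp - y)) y := by
  intro z
  have hC : (0:ℝ) ≤ ‖z - y‖ ^ 2 / 2 := by positivity
  have key : ∀ t : ℝ, 0 < t → t ≤ 1 →
      a * f y - a * f z + ⟪xp - y, z - y⟫ ≤ t * (‖z - y‖ ^ 2 / 2) := by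
    intro t ht ht1
    have hmem := isMinOn_iff.mp hmin (y + t • (z - y)) (Set.mem_univ _)
    have hconvt : f (y + t • (z - y)) ≤ (1 - t) * f y + t * f z := by
      have h2 := hconv.2 (Set.mem_univ y) (Set.mem_univ z)
        (by linarith : (0:ℝ) ≤ 1 - t) ht.le (by ring)
      have heq : (1 - t) • y + t • z = y + t • (z - y) := by
        rw [smul_sub]; module
      rwa [heq] at h2
    have h1 : y + t • (z - y) - xp = (y - xp) + t • (z - y) := by abel
    have hnorm : ‖y + t • (z - y) - xp‖ ^ 2
        = ‖y - xp‖ ^ 2 + 2 * (t * ⟪y - xp, z - y⟫) + t ^ 2 * ‖z - y‖ ^ 2 := by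
      rw [h1, norm_add_sq_real, real_inner_smul_right, norm_smul,
        Real.norm_eq_abs, mul_pow, sq_abs]
    have hinner : ⟪xp - y, z - y⟫ = -⟪y - xp, z - y⟫ := by
      rw [← neg_sub y xp, inner_neg_left]
    have hmul := mul_le_mul_of_nonneg_left hconvt ha.le
    rw [hnorm] at hmem
    have h3 : t * (a * f y - a * f z + ⟪xp - y, z - y⟫)
        ≤ t * (t * (‖z - y‖ ^ 2 / 2)) := by
      rw [hinner]; nlinarith [hmem, hmul]
    exact le_of_mul_le_mul_left h3 ht
  have hL : a * f y - a * f z + ⟪xp - y, z - y⟫ ≤ 0 := by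
    refine le_of_forall_pos_le_add ?_
    intro ε hε
    have hCpos : (0:ℝ) < ‖z - y‖ ^ 2 / 2 + 1 := by positivity
    have htpos : 0 < min 1 (ε / (‖z - y‖ ^ 2 / 2 + 1)) :=
      lt_min one_pos (div_pos hε hCpos)
    have hk := key _ htpos (min_le_left _ _)
    have h4 : min 1 (ε / (‖z - y‖ ^ 2 / 2 + 1)) * (‖z - y‖ ^ 2 / 2) ≤ ε := by
      have h5 : min 1 (ε / (‖z - y‖ ^ 2 / 2 + 1)) * (‖z - y‖ ^ 2 / 2)
          ≤ (ε / (‖z - y‖ ^ 2 / 2 + 1)) * (‖z - y‖ ^ 2 / 2 + 1) :=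
        mul_le_mul (min_le_right _ _) (by linarith) hC
          (le_of_lt (div_pos hε hCpos))
      rwa [div_mul_cancel₀ _ (ne_of_gt hCpos)] at h5
    linarith
  have hinner2 : ⟪a⁻¹ • (xp - y), z - y⟫ = a⁻¹ * ⟪xp - y, z - y⟫ :=
    real_inner_smul_left _ _ _
  rw [hinner2]
  have h5 : a * (f y + a⁻¹ * ⟪xp - y, z - y⟫) ≤ a * f z := by
    rw [mul_add, ← mul_assoc, mul_inv_cancel₀ (ne_of_gt ha), one_mul]
    linarith
  exact le_of_mul_le_mul_left h5 ha

set_option maxHeartbeats 2000000 in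
/-- Tight subgradient-norm bound for the proximal point algorithm
(Conjecture 4.2 of Taylor–Hendrickx–Glineur, Euclidean norm case). -/
theorem stmt3 {n : ℕ} (f : EuclideanSpace ℝ (Fin n) → ℝ)
    (hconv : ConvexOn ℝ Set.univ f) (hlsc : LowerSemicontinuous f)
    (N : ℕ) (hN : 1 ≤ N) (α : ℕ → ℝ) (hα : ∀ i ∈ Finset.Icc 1 N, 0 < α i)
    (xstar : EuclideanSpace ℝ (Fin n)) (hstar : ∀ z, f xstar ≤ f z)
    (R : ℝ) (hR : 0 < R)
    (x : ℕ → EuclideanSpace ℝ (Fin n)) (hx0 : ‖x 0 - xstar‖ ≤ R)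
    (hiter : ∀ i ∈ Finset.Icc 1 N,
      IsMinOn (fun z => α i * f z + ‖z - x (i - 1)‖ ^ 2 / 2) Set.univ (x i)) :
    SubgradAt f ((α N)⁻¹ • (x (N - 1) - x N)) (x N) ∧
    ‖(α N)⁻¹ • (x (N - 1) - x N)‖ ≤ R / ∑ k ∈ Finset.Icc 1 N, α k := by
  have hαpos : ∀ i, 1 ≤ i → i ≤ N → 0 < α i := fun i h1 h2 =>
    hα i (Finset.mem_Icc.mpr ⟨h1, h2⟩)
  have hsub : ∀ i, 1 ≤ i → i ≤ N →
      SubgradAt f ((α i)⁻¹ • (x (i - 1) - x i)) (x i) := fun i h1 h2 =>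
    prox_subgrad hconv (hαpos i h1 h2) (hiter i (Finset.mem_Icc.mpr ⟨h1, h2⟩))
  have hnsmul : ∀ (c : ℝ) (w : EuclideanSpace ℝ (Fin n)),
      ‖c • w‖ ^ 2 = c ^ 2 * ‖w‖ ^ 2 := by
    intro c w
    rw [norm_smul, Real.norm_eq_abs, mul_pow, sq_abs]
  have hstep : ∀ i, 1 ≤ i → i ≤ N →
      x (i - 1) - x i = α i • (α i)⁻¹ • (x (i - 1) - x i) := fun i h1 h2 =>
    (smul_inv_smul₀ (ne_of_gt (hαpos i h1 h2)) _).symm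
  -- (A) distance decrease
  have hA : ∀ i, 1 ≤ i → i ≤ N →
      ‖x i - xstar‖ ^ 2 + 2 * α i * (f (x i) - f xstar)
        + (α i) ^ 2 * ‖(α i)⁻¹ • (x (i - 1) - x i)‖ ^ 2
      ≤ ‖x (i - 1) - xstar‖ ^ 2 := by
    intro i h1 h2
    have hgs := hsub i h1 h2 xstar
    have hgs' : f (x i) - f xstar
        ≤ ⟪(α i)⁻¹ • (x (i - 1) - x i), x i - xstar⟫ := by
      have hneg : ⟪(α i)⁻¹ • (x (i - 1) - x i), xstar - x i⟫
          = -⟪(α i)⁻¹ • (x (i - 1) - x i), x i - xstar⟫ := by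
        rw [← neg_sub (x i) xstar, inner_neg_right]
      rw [hneg] at hgs; linarith
    have hid : x (i - 1) - xstar
        = (x i - xstar) + α i • (α i)⁻¹ • (x (i - 1) - x i) := by
      rw [← hstep i h1 h2]; abel
    have hexp := norm_add_sq_real (x i - xstar) (α i • (α i)⁻¹ • (x (i - 1) - x i))
    rw [← hid, hnsmul, real_inner_smul_right, real_inner_comm] at hexp
    have h2a := mul_le_mul_of_nonneg_left hgs'
      (by linarith [hαpos i h1 h2] : (0:ℝ) ≤ 2 * α i)
    rw [hexp]; linarith
  -- (B) function value descent
  have hB : ∀ i, 1 ≤ i → i ≤ N →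
      f (x i) + α i * ‖(α i)⁻¹ • (x (i - 1) - x i)‖ ^ 2 ≤ f (x (i - 1)) := by
    intro i h1 h2
    have hαp := hαpos i h1 h2
    have hgs := hsub i h1 h2 (x (i - 1))
    have hiw : ⟪(α i)⁻¹ • (x (i - 1) - x i), x (i - 1) - x i⟫
        = (α i)⁻¹ * ‖x (i - 1) - x i‖ ^ 2 := by
      rw [real_inner_smul_left, real_inner_self_eq_norm_sq]
    rw [hiw] at hgs
    have hn : ‖(α i)⁻¹ • (x (i - 1) - x i)‖ ^ 2
        = ((α i)⁻¹) ^ 2 * ‖x (i - 1) - x i‖ ^ 2 := hnsmul _ _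
    have hc : α i * (((α i)⁻¹) ^ 2 * ‖x (i - 1) - x i‖ ^ 2)
        = (α i)⁻¹ * ‖x (i - 1) - x i‖ ^ 2 := by
      field_simp
    rw [hn, hc]; linarith
  -- (C) subgradient norms decrease
  have hC : ∀ k, 1 ≤ k → k + 1 ≤ N →
      ‖(α (k+1))⁻¹ • (x (k + 1 - 1) - x (k+1))‖
        ≤ ‖(α k)⁻¹ • (x (k - 1) - x k)‖ := by
    intro k hk hk1
    have hαp := hαpos (k+1) (by omega) hk1
    have hcpos : (0:ℝ) < (α (k+1))⁻¹ := by positivity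
    have hxk : (k + 1 - 1 : ℕ) = k := rfl
    rw [hxk]
    have h1 := hsub k hk (by omega) (x (k+1))
    have h2 := hsub (k+1) (by omega) hk1 (x k)
    rw [hxk] at h2
    -- h2 : f (x (k+1)) + ⟪(α (k+1))⁻¹ • (x k - x (k+1)), x k - x (k+1)⟫ ≤ f (x k)
    have hiw2 : ⟪(α (k+1))⁻¹ • (x k - x (k+1)), x k - x (k+1)⟫
        = (α (k+1))⁻¹ * ‖x k - x (k+1)‖ ^ 2 := by
      rw [real_inner_smul_left, real_inner_self_eq_norm_sq]
    rw [hiw2] at h2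
    have hneg1 : ⟪(α k)⁻¹ • (x (k - 1) - x k), x (k+1) - x k⟫
        = -⟪(α k)⁻¹ • (x (k - 1) - x k), x k - x (k+1)⟫ := by
      rw [← neg_sub (x k) (x (k+1)), inner_neg_right]
    rw [hneg1] at h1
    have hkey : (α (k+1))⁻¹ * ‖x k - x (k+1)‖ ^ 2
        ≤ ⟪(α k)⁻¹ • (x (k - 1) - x k), x k - x (k+1)⟫ := by linarith
    refine norm_le_of_sq_le_inner _ _ ?_
    have hir : ⟪(α k)⁻¹ • (x (k - 1) - x k), (α (k+1))⁻¹ • (x k - x (k+1))⟫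
        = (α (k+1))⁻¹ * ⟪(α k)⁻¹ • (x (k - 1) - x k), x k - x (k+1)⟫ :=
      real_inner_smul_right _ _ _
    rw [hir, hnsmul]
    nlinarith [mul_le_mul_of_nonneg_left hkey hcpos.le]
  -- main induction
  have main : ∀ k, 1 ≤ k → k ≤ N →
      (∑ j ∈ Finset.Icc 1 k, α j) ^ 2 * ‖(α k)⁻¹ • (x (k - 1) - x k)‖ ^ 2
        + ‖x k - xstar‖ ^ 2
        + 2 * (∑ j ∈ Finset.Icc 1 k, α j) * (f (x k) - f xstar)
      ≤ ‖x 0 - xstar‖ ^ 2 := by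
    intro k hk
    induction k, hk using Nat.le_induction with
    | base =>
      intro h1N
      have hA1 := hA 1 le_rfl h1N
      rw [Finset.Icc_self, Finset.sum_singleton]
      have h11 : (1 - 1 : ℕ) = 0 := rfl
      rw [h11] at hA1 ⊢
      nlinarith [hA1]
    | succ k hk ih =>
      intro hk1N
      have hkN : k ≤ N := by omega
      have ihh := ih hkN
      have hAk := hA (k+1) (by omega) hk1N
      have hBk := hB (k+1) (by omega) hk1N
      have hCk := hC k hk hk1N
      have hxk : (k + 1 - 1 : ℕ) = k := rfl
      rw [hxk] at hAk hBk hCk ⊢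
      have hsum : ∑ j ∈ Finset.Icc 1 (k+1), α j
          = (∑ j ∈ Finset.Icc 1 k, α j) + α (k+1) :=
        Finset.sum_Icc_succ_top (by omega) _
      rw [hsum]
      have hσpos : 0 < ∑ j ∈ Finset.Icc 1 k, α j :=
        Finset.sum_pos (fun i hi => hα i (Finset.mem_Icc.mpr
          ⟨(Finset.mem_Icc.mp hi).1, le_trans (Finset.mem_Icc.mp hi).2 hkN⟩))
          (Finset.nonempty_Icc.mpr hk)
      have hαp := hαpos (k+1) (by omega) hk1N
      have hh1 : 0 ≤ f (x (k+1)) - f xstar := by linarith [hstar (x (k+1))]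
      -- abstract into real variables
      set s : ℝ := ∑ j ∈ Finset.Icc 1 k, α j with hs
      set a : ℝ := α (k+1) with ha
      set n0 : ℝ := ‖(α k)⁻¹ • (x (k - 1) - x k)‖ with hn0
      set n1 : ℝ := ‖a⁻¹ • (x k - x (k+1))‖ with hn1
      set D0 : ℝ := ‖x k - xstar‖ with hD0
      set D1 : ℝ := ‖x (k+1) - xstar‖ with hD1
      set Dz : ℝ := ‖x 0 - xstar‖ with hDz
      set F0 : ℝ := f (x k) with hF0
      set F1 : ℝ := f (x (k+1)) with hF1
      set Fs : ℝ := f xstar with hFs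
      have hn1nn : 0 ≤ n1 := by rw [hn1]; exact norm_nonneg _
      have hC2 : n1 ^ 2 ≤ n0 ^ 2 := pow_le_pow_left₀ hn1nn hCk 2
      have t1 : s ^ 2 * n1 ^ 2 ≤ s ^ 2 * n0 ^ 2 :=
        mul_le_mul_of_nonneg_left hC2 (sq_nonneg s)
      have t2 : 2 * s * (F1 + a * n1 ^ 2) ≤ 2 * s * F0 :=
        mul_le_mul_of_nonneg_left hBk (by linarith)
      nlinarith [t1, t2, hAk, ihh]
  -- conclusion
  refine ⟨hsub N hN le_rfl, ?_⟩
  have hS : 0 < ∑ k ∈ Finset.Icc 1 N, α k :=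
    Finset.sum_pos (fun i hi => hα i hi) (Finset.nonempty_Icc.mpr hN)
  have hmainN := main N hN le_rfl
  have hd0 : ‖x 0 - xstar‖ ^ 2 ≤ R ^ 2 := by
    nlinarith [norm_nonneg (x 0 - xstar)]
  have hhN : 0 ≤ f (x N) - f xstar := by linarith [hstar (x N)]
  set S : ℝ := ∑ k ∈ Finset.Icc 1 N, α k with hSdef
  set G : ℝ := ‖(α N)⁻¹ • (x (N - 1) - x N)‖ with hGdef
  have hGnn : 0 ≤ G := by rw [hGdef]; exact norm_nonneg _
  have hq : S ^ 2 * G ^ 2 ≤ R ^ 2 := by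
    nlinarith [hmainN, hd0, sq_nonneg ‖x N - xstar‖,
      mul_nonneg (by linarith : (0:ℝ) ≤ 2 * S) hhN]
  rw [le_div_iff₀ hS]
  nlinarith [hq, hGnn, mul_nonneg hS.le hGnn]
end

section
/- Let B be a symmetric positive definite n×n matrix, f a proper closed convex function on ℝⁿ with minimizer x*, and ‖x_0 − x*‖_B ≤ R. Define x_i = argmin_y { α_i f(y) + ½‖y − x_{i−1}‖_B² } for positive step sizes α_i, i = 1, ..., N. Then g_N = B(x_{N−1} − x_N)/α_N is a subgradient of f at x_N and ‖g_N‖_{B^{-1}} ≤ R / (α_1 + ... + α_N). -/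
open Matrix

variable {n : ℕ}

lemma bsymm (B : Matrix (Fin n) (Fin n) ℝ) (hB : B.PosDef) (u v : Fin n → ℝ) :
    B.mulVec u ⬝ᵥ v = B.mulVec v ⬝ᵥ u := by
  have hs : Bᵀ = B := hB.1
  rw [dotProduct_comm, dotProduct_mulVec, ← mulVec_transpose, hs]

lemma bnonneg (B : Matrix (Fin n) (Fin n) ℝ) (hB : B.PosDef) (v : Fin n → ℝ) :
    0 ≤ B.mulVec v ⬝ᵥ v := by
  have := hB.posSemidef.dotProduct_mulVec_nonneg v
  simp at this
  rw [dotProduct_comm]; exact this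

lemma subgrad (B : Matrix (Fin n) (Fin n) ℝ) (hB : B.PosDef)
    (f : (Fin n → ℝ) → ℝ) (hconv : ConvexOn ℝ Set.univ f)
    (a : ℝ) (ha : 0 < a) (w y : Fin n → ℝ)
    (hmin : IsMinOn (fun z => a * f z + (B.mulVec (z - w) ⬝ᵥ (z - w)) / 2) Set.univ y)
    (z : Fin n → ℝ) :
    f y + a⁻¹ * (B.mulVec (w - y) ⬝ᵥ (z - y)) ≤ f z := by
  set u : Fin n → ℝ := y - w with hu
  set v : Fin n → ℝ := z - y with hv
  set c : ℝ := B.mulVec v ⬝ᵥ v with hc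
  have hc0 : 0 ≤ c := bnonneg B hB v
  have key : ∀ t : ℝ, 0 < t → t ≤ 1 →
      0 ≤ a * (f z - f y) + B.mulVec u ⬝ᵥ v + t * c / 2 := by
    intro t ht ht1
    have hzt : y + t • v = (1 - t) • y + t • z := by
      rw [hv]; module
    have hfzt : f (y + t • v) ≤ (1 - t) * f y + t * f z := by
      rw [hzt]
      exact hconv.2 (Set.mem_univ y) (Set.mem_univ z) (by linarith) (le_of_lt ht) (by ring)
    have hm := hmin (Set.mem_univ (y + t • v))
    simp only [Set.mem_setOf_eq] at hm
    have hexp : B.mulVec ((y + t • v) - w) ⬝ᵥ ((y + t • v) - w)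
        = B.mulVec u ⬝ᵥ u + 2 * t * (B.mulVec u ⬝ᵥ v) + t^2 * c := by
      have h1 : (y + t • v) - w = u + t • v := by rw [hu]; abel
      rw [h1]
      have hsy := bsymm B hB v u
      simp only [mulVec_add, mulVec_smul, add_dotProduct, dotProduct_add,
        smul_dotProduct, dotProduct_smul, smul_eq_mul] at hsy ⊢
      rw [hc]; nlinarith [hsy]
    rw [hexp] at hm
    have h2 : 0 ≤ t * (a * (f z - f y) + B.mulVec u ⬝ᵥ v + t * c / 2) := by nlinarith
    exact nonneg_of_mul_nonneg_right h2 ht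
  have hA : 0 ≤ a * (f z - f y) + B.mulVec u ⬝ᵥ v := by
    by_contra hA
    push_neg at hA
    set A : ℝ := a * (f z - f y) + B.mulVec u ⬝ᵥ v with hAdef
    set t : ℝ := min 1 (-A / (c + 1)) with htdef
    have ht0 : 0 < t := lt_min one_pos (div_pos (by linarith) (by linarith))
    have ht1 : t ≤ 1 := min_le_left _ _
    have ht2 : t * (c + 1) ≤ -A := by
      have := min_le_right 1 (-A / (c + 1))
      calc t * (c+1) ≤ (-A / (c+1)) * (c+1) := by nlinarith
        _ = -A := by field_simp
    have := key t ht0 ht1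
    nlinarith
  have huv : B.mulVec (w - y) ⬝ᵥ v = -(B.mulVec u ⬝ᵥ v) := by
    have : w - y = -u := by rw [hu]; abel
    rw [this]
    simp [mulVec_neg]
  rw [huv]
  have ha' : a⁻¹ * a = 1 := inv_mul_cancel₀ ha.ne'
  have h4 : 0 ≤ a⁻¹ * (a * (f z - f y) + B.mulVec u ⬝ᵥ v) :=
    mul_nonneg (inv_pos.mpr ha).le hA
  rw [mul_add, ← mul_assoc, ha', one_mul] at h4
  linarith

lemma bexpand {n : ℕ} (B : Matrix (Fin n) (Fin n) ℝ) (hB : B.PosDef) (u v : Fin n → ℝ) :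
    B.mulVec (u + v) ⬝ᵥ (u + v)
      = B.mulVec u ⬝ᵥ u + 2 * (B.mulVec u ⬝ᵥ v) + B.mulVec v ⬝ᵥ v := by
  have hsy := bsymm B hB v u
  simp only [mulVec_add, add_dotProduct, dotProduct_add]
  linarith


lemma keysum (α q : ℕ → ℝ) (c : ℝ) (hc : 0 ≤ c) :
    ∀ N : ℕ, (∀ i ∈ Finset.Icc 1 N, 0 ≤ α i) → (∀ i ∈ Finset.Icc 1 N, c ≤ q i) →
    (∑ i ∈ Finset.Icc 1 N, α i)^2 * c ≤
      ∑ i ∈ Finset.Icc 1 N,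
        (α i^2 * q i + 2 * α i * ∑ j ∈ Finset.Icc (i+1) N, α j * q j) := by
  intro N
  induction N with
  | zero => simp
  | succ N ih =>
    intro hα hq
    have hα' : ∀ i ∈ Finset.Icc 1 N, 0 ≤ α i := fun i hi => by
      refine hα i ?_; simp only [Finset.mem_Icc] at hi ⊢; omega
    have hq' : ∀ i ∈ Finset.Icc 1 N, c ≤ q i := fun i hi => by
      refine hq i ?_; simp only [Finset.mem_Icc] at hi ⊢; omega
    have IH := ih hα' hq'
    have hS : 0 ≤ ∑ i ∈ Finset.Icc 1 N, α i := Finset.sum_nonneg hα'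
    have haN : 0 ≤ α (N+1) := hα (N+1) (by simp)
    have hqN : c ≤ q (N+1) := hq (N+1) (by simp)
    rw [Finset.sum_Icc_succ_top (by omega : 1 ≤ N+1),
        Finset.sum_Icc_succ_top (by omega : 1 ≤ N+1)]
    have hempty : Finset.Icc (N+1+1) (N+1) = ∅ := by
      apply Finset.Icc_eq_empty; omega
    rw [hempty]
    have h1 : ∑ i ∈ Finset.Icc 1 N,
        (α i^2 * q i + 2 * α i * ∑ j ∈ Finset.Icc (i+1) (N+1), α j * q j)
      = (∑ i ∈ Finset.Icc 1 N,
          (α i^2 * q i + 2 * α i * ∑ j ∈ Finset.Icc (i+1) N, α j * q j))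
        + (∑ i ∈ Finset.Icc 1 N, α i) * (2 * α (N+1) * q (N+1)) := by
      rw [Finset.sum_mul]
      rw [← Finset.sum_add_distrib]
      refine Finset.sum_congr rfl fun i hi => ?_
      rw [Finset.sum_Icc_succ_top (by simp only [Finset.mem_Icc] at hi; omega : i+1 ≤ N+1)]
      ring
    rw [h1]
    simp only [Finset.sum_empty]
    nlinarith [mul_nonneg (mul_nonneg hS haN) (sub_nonneg.mpr hqN),
      mul_nonneg (mul_nonneg haN haN) (sub_nonneg.mpr hqN)]

/-- Subgradient-norm bound for the proximal point algorithm in the `B`-norm,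
where `B` is symmetric positive definite: the subgradient
`g_N = B(x_{N-1} - x_N)/α_N ∈ ∂f(x_N)` satisfies
`‖g_N‖_{B⁻¹} ≤ R / (α_1 + ⋯ + α_N)`. -/
theorem stmt4 {n : ℕ} (B : Matrix (Fin n) (Fin n) ℝ) (hB : B.PosDef)
    (f : (Fin n → ℝ) → ℝ)
    (hconv : ConvexOn ℝ Set.univ f) (hlsc : LowerSemicontinuous f)
    (N : ℕ) (hN : 1 ≤ N) (α : ℕ → ℝ) (hα : ∀ i ∈ Finset.Icc 1 N, 0 < α i)
    (xstar : Fin n → ℝ) (hstar : ∀ z, f xstar ≤ f z)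
    (R : ℝ) (hR : 0 < R)
    (x : ℕ → Fin n → ℝ)
    (hx0 : Real.sqrt (B.mulVec (x 0 - xstar) ⬝ᵥ (x 0 - xstar)) ≤ R)
    (hiter : ∀ i ∈ Finset.Icc 1 N,
      IsMinOn (fun z => α i * f z + (B.mulVec (z - x (i - 1)) ⬝ᵥ (z - x (i - 1))) / 2)
        Set.univ (x i)) :
    (∀ z, f (x N) + ((α N)⁻¹ • B.mulVec (x (N - 1) - x N)) ⬝ᵥ (z - x N) ≤ f z) ∧
    Real.sqrt (((α N)⁻¹ • B.mulVec (x (N - 1) - x N)) ⬝ᵥ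
        B⁻¹.mulVec ((α N)⁻¹ • B.mulVec (x (N - 1) - x N)))
      ≤ R / ∑ k ∈ Finset.Icc 1 N, α k := by
  set d : ℕ → Fin n → ℝ := fun i => (α i)⁻¹ • (x (i-1) - x i) with hd
  set Q : ℕ → ℝ := fun i => B.mulVec (d i) ⬝ᵥ d i with hQdef
  set S : ℝ := ∑ k ∈ Finset.Icc 1 N, α k with hSdef
  have hNmem : N ∈ Finset.Icc 1 N := by simp [hN]
  have hS : 0 < S := Finset.sum_pos hα ⟨N, hNmem⟩
  -- x (i-1) - x i = α i • d i
  have hxd : ∀ i ∈ Finset.Icc 1 N, x (i-1) - x i = α i • d i := by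
    intro i hi
    rw [hd]
    simp only
    rw [smul_smul, mul_inv_cancel₀ (hα i hi).ne', one_smul]
  -- subgradient inequality
  have hsub : ∀ i ∈ Finset.Icc 1 N, ∀ z, f (x i) + B.mulVec (d i) ⬝ᵥ (z - x i) ≤ f z := by
    intro i hi z
    have h := subgrad B hB f hconv (α i) (hα i hi) (x (i-1)) (x i) (hiter i hi) z
    have he : B.mulVec (d i) ⬝ᵥ (z - x i)
        = (α i)⁻¹ * (B.mulVec (x (i-1) - x i) ⬝ᵥ (z - x i)) := by
      rw [hd]; simp only [mulVec_smul, smul_dotProduct, smul_eq_mul]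
    rw [he]; exact h
  -- descent (a)
  have hdesc : ∀ i ∈ Finset.Icc 1 N, f (x i) + α i * Q i ≤ f (x (i-1)) := by
    intro i hi
    have h := hsub i hi (x (i-1))
    rw [hxd i hi, dotProduct_smul, smul_eq_mul] at h
    linarith [h]
  -- (b): accumulated descent
  have hb : ∀ k, k ≤ N → f (x N) + ∑ j ∈ Finset.Icc (N-k+1) N, α j * Q j ≤ f (x (N-k)) := by
    intro k
    induction k with
    | zero =>
      intro _
      rw [Nat.sub_zero, Finset.Icc_eq_empty (by omega)]
      simp
    | succ k ihk =>
      intro hkN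
      have IH := ihk (by omega)
      have hik : (N - k) ∈ Finset.Icc 1 N := by simp only [Finset.mem_Icc]; omega
      have ha := hdesc (N-k) hik
      have h1 : N - k - 1 = N - (k+1) := by omega
      rw [h1] at ha
      have h2 : N - (k+1) + 1 = N - k := by omega
      rw [h2]
      have hins : insert (N-k) (Finset.Icc (N-k+1) N) = Finset.Icc (N-k) N := by
        rw [Finset.Icc_add_one_left_eq_Ioc]
        exact Finset.Ioc_insert_left (by omega)
      rw [← hins, Finset.sum_insert (by simp only [Finset.mem_Icc]; omega)]
      linarith
  -- monotonicity of Q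
  have hstep : ∀ j, 1 ≤ j → j + 1 ≤ N → Q (j+1) ≤ Q j := by
    intro j h1 h2
    have hj : j ∈ Finset.Icc 1 N := by simp only [Finset.mem_Icc]; omega
    have hj1 : (j+1) ∈ Finset.Icc 1 N := by simp only [Finset.mem_Icc]; omega
    have e1 := hsub j hj (x (j+1))
    have e2 := hsub (j+1) hj1 (x j)
    have hx1 : x ((j+1)-1) - x (j+1) = α (j+1) • d (j+1) := hxd (j+1) hj1
    rw [Nat.add_sub_cancel] at hx1
    rw [hx1, dotProduct_smul, smul_eq_mul] at e2
    have hx2 : x (j+1) - x j = -(α (j+1) • d (j+1)) := by rw [← hx1]; abel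
    rw [hx2, dotProduct_neg, dotProduct_smul, smul_eq_mul] at e1
    have hcross : Q (j+1) ≤ B.mulVec (d j) ⬝ᵥ d (j+1) := by
      have hα1 := hα (j+1) hj1
      nlinarith [e1, e2]
    have hexp : 0 ≤ Q j - 2 * (B.mulVec (d j) ⬝ᵥ d (j+1)) + Q (j+1) := by
      have h0 := bnonneg B hB (d j - d (j+1))
      have hsy := bsymm B hB (d (j+1)) (d j)
      rw [mulVec_sub, sub_dotProduct, dotProduct_sub, dotProduct_sub] at h0
      rw [hQdef]
      simp only at h0 ⊢
      linarith
    linarith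
  have hmono : ∀ i ∈ Finset.Icc 1 N, Q N ≤ Q i := by
    intro i hi
    simp only [Finset.mem_Icc] at hi
    have key : ∀ j, i ≤ j → j ≤ N → Q j ≤ Q i := by
      intro j hj
      induction j, hj using Nat.le_induction with
      | base => intro _; exact le_rfl
      | succ j hij ihj =>
        intro hjN
        exact le_trans (hstep j (le_trans hi.1 hij) hjN) (ihj (by omega))
    exact key N hi.2 le_rfl
  -- energy
  set E : ℕ → ℝ := fun i => B.mulVec (x i - xstar) ⬝ᵥ (x i - xstar) with hEdef
  -- per-step inequality
  have hper : ∀ i ∈ Finset.Icc 1 N,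
      α i^2 * Q i + 2 * α i * ∑ j ∈ Finset.Icc (i+1) N, α j * Q j ≤ E (i-1) - E i := by
    intro i hi
    simp only [Finset.mem_Icc] at hi
    have hi' : i ∈ Finset.Icc 1 N := by simp only [Finset.mem_Icc]; omega
    -- identity
    have hxid : x (i-1) - xstar = (x i - xstar) + α i • d i := by
      rw [← hxd i hi']; abel
    have hEexp : E (i-1) = E i + 2 * α i * (B.mulVec (d i) ⬝ᵥ (x i - xstar)) + α i^2 * Q i := by
      have h0 : E (i-1) = B.mulVec ((x i - xstar) + α i • d i) ⬝ᵥ ((x i - xstar) + α i • d i) := by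
        rw [hEdef]; simp only; rw [hxid]
      rw [h0, bexpand B hB]
      have h1 : B.mulVec (x i - xstar) ⬝ᵥ (α i • d i)
          = α i * (B.mulVec (d i) ⬝ᵥ (x i - xstar)) := by
        rw [dotProduct_smul, smul_eq_mul, bsymm B hB]
      have h2 : B.mulVec (α i • d i) ⬝ᵥ (α i • d i) = α i^2 * Q i := by
        rw [mulVec_smul, smul_dotProduct, dotProduct_smul, smul_eq_mul, smul_eq_mul, hQdef]
        ring
      rw [h1, h2, hEdef]
      ring
    -- subgradient at xstar
    have hst : f (x i) - f xstar ≤ B.mulVec (d i) ⬝ᵥ (x i - xstar) := by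
      have h := hsub i hi' xstar
      have : xstar - x i = -(x i - xstar) := by abel
      rw [this, dotProduct_neg] at h
      linarith
    -- (b) at k = N - i
    have hbi := hb (N - i) (by omega)
    rw [show N - (N - i) = i by omega] at hbi
    have hfs : ∑ j ∈ Finset.Icc (i+1) N, α j * Q j ≤ f (x i) - f xstar := by
      have := hstar (x N)
      linarith
    have hαi := hα i hi'
    nlinarith [hst, hfs, hEexp]
  -- telescoping
  have htel : ∀ M : ℕ, ∑ i ∈ Finset.Icc 1 M, (E (i-1) - E i) = E 0 - E M := by
    intro M
    induction M with
    | zero => simp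
    | succ M ihM =>
      rw [Finset.sum_Icc_succ_top (by omega : 1 ≤ M+1), ihM, Nat.add_sub_cancel]
      ring
  -- combine
  have hsum : S^2 * Q N ≤ E 0 - E N := by
    calc S^2 * Q N ≤ ∑ i ∈ Finset.Icc 1 N,
          (α i^2 * Q i + 2 * α i * ∑ j ∈ Finset.Icc (i+1) N, α j * Q j) :=
        keysum α Q (Q N) (bnonneg B hB (d N)) N (fun i hi => (hα i hi).le) hmono
      _ ≤ ∑ i ∈ Finset.Icc 1 N, (E (i-1) - E i) := Finset.sum_le_sum hper
      _ = E 0 - E N := htel N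
  have hE0 : E 0 ≤ R^2 := by
    have h1 : 0 ≤ E 0 := bnonneg B hB _
    have := Real.sqrt_le_sqrt (Real.sq_sqrt h1 ▸ le_refl (E 0))
    nlinarith [Real.sq_sqrt h1, Real.sqrt_nonneg (E 0), hx0]
  have hEN : 0 ≤ E N := bnonneg B hB _
  have hQR : Q N ≤ (R / S)^2 := by
    rw [div_pow, le_div_iff₀ (by positivity)]
    nlinarith [hsum, hE0, hEN]
  constructor
  · intro z
    have h := hsub N hNmem z
    have he : ((α N)⁻¹ • B.mulVec (x (N - 1) - x N)) ⬝ᵥ (z - x N)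
        = B.mulVec (d N) ⬝ᵥ (z - x N) := by
      rw [hd]; simp only [mulVec_smul]
    rw [he]; exact h
  · have hg : (α N)⁻¹ • B.mulVec (x (N - 1) - x N) = B.mulVec (d N) := by
      rw [hd]; simp only [mulVec_smul]
    rw [hg]
    have hinv : B⁻¹.mulVec (B.mulVec (d N)) = d N := by
      rw [mulVec_mulVec, nonsing_inv_mul _ hB.det_pos.ne'.isUnit, one_mulVec]
    rw [hinv]
    have : Real.sqrt (B.mulVec (d N) ⬝ᵥ d N) = Real.sqrt (Q N) := by rw [hQdef]
    rw [this]
    calc Real.sqrt (Q N) ≤ Real.sqrt ((R/S)^2) := Real.sqrt_le_sqrt hQR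
      _ = R / S := Real.sqrt_sq (by positivity)
end

section
/- Let f be a proper closed convex function on ℝⁿ with minimizer x*, ‖x_0 − x*‖ ≤ R, and x_i = prox_{α_i f}(x_{i−1}) for positive step sizes α_i. Then f(x_N) − f(x*) ≤ R² / (4 Σ_{i=1}^N α_i). -/
set_option maxHeartbeats 1000000 in
/-- Tight function-value bound for the proximal point algorithm
(Theorem 4.1 of Taylor–Hendrickx–Glineur):
`f(x_N) - f(x_*) ≤ R² / (4 Σ_{i=1}^N α_i)`. -/
theorem stmt6 {n : ℕ} (f : EuclideanSpace ℝ (Fin n) → ℝ)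
    (hconv : ConvexOn ℝ Set.univ f) (hlsc : LowerSemicontinuous f)
    (N : ℕ) (hN : 1 ≤ N) (α : ℕ → ℝ) (hα : ∀ i ∈ Finset.Icc 1 N, 0 < α i)
    (xstar : EuclideanSpace ℝ (Fin n)) (hstar : ∀ z, f xstar ≤ f z)
    (R : ℝ) (hR : 0 < R)
    (x : ℕ → EuclideanSpace ℝ (Fin n)) (hx0 : ‖x 0 - xstar‖ ≤ R)
    (hiter : ∀ i ∈ Finset.Icc 1 N,
      IsMinOn (fun z => α i * f z + ‖z - x (i - 1)‖ ^ 2 / 2) Set.univ (x i)) :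
    f (x N) - f xstar ≤ R ^ 2 / (4 * ∑ k ∈ Finset.Icc 1 N, α k) := by
  set L : ℝ := ∑ k ∈ Finset.Icc 1 N, α k with hLdef
  set s : ℕ → ℝ := fun m => ∑ k ∈ Finset.Icc 1 m, α k with hsdef
  have hsN : s N = L := rfl
  have hs0 : s 0 = 0 := by simp [hsdef]
  have hstep : ∀ m : ℕ, m + 1 ≤ N → s (m + 1) = s m + α (m + 1) := by
    intro m hm
    simp only [hsdef]
    rw [Finset.sum_Icc_succ_top (Nat.succ_le_succ (Nat.zero_le m))]
  have hsnn : ∀ m, m ≤ N → 0 ≤ s m := by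
    intro m hm
    apply Finset.sum_nonneg
    intro k hk
    rw [Finset.mem_Icc] at hk
    exact (hα k (Finset.mem_Icc.mpr ⟨hk.1, hk.2.trans hm⟩)).le
  have hsmono : ∀ m, m ≤ N → s m ≤ L := by
    intro m hm
    apply Finset.sum_le_sum_of_subset_of_nonneg
      (Finset.Icc_subset_Icc_right hm)
    intro k hk _
    rw [Finset.mem_Icc] at hk
    exact (hα k (Finset.mem_Icc.mpr hk)).le
  have hL : 0 < L := by
    apply Finset.sum_pos hα ⟨1, Finset.mem_Icc.mpr ⟨le_refl 1, hN⟩⟩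
  clear_value s L
  -- the subgradient inequality coming from the prox step
  have key : ∀ m : ℕ, m + 1 ≤ N → ∀ z,
      (inner ℝ (x m - x (m + 1)) (z - x (m + 1)) : ℝ) ≤ α (m + 1) * (f z - f (x (m + 1))) := by
    intro m hm z
    have hmem : m + 1 ∈ Finset.Icc 1 N :=
      Finset.mem_Icc.mpr ⟨Nat.succ_le_succ (Nat.zero_le m), hm⟩
    have hαp : 0 < α (m + 1) := hα _ hmem
    have hmin := (isMinOn_iff.mp (hiter _ hmem))
    simp only [Nat.add_sub_cancel] at hmin
    set Q : ℝ := ‖z - x (m + 1)‖ ^ 2 with hQdef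
    have hQ : 0 ≤ Q := by rw [hQdef]; positivity
    set K : ℝ := α (m + 1) * (f z - f (x (m + 1)))
      + (inner ℝ (x (m + 1) - x m) (z - x (m + 1)) : ℝ) with hK
    have hstep' : ∀ t : ℝ, 0 < t → t ≤ 1 → 0 ≤ K + t * (Q / 2) := by
      intro t ht ht1
      have h1 : α (m + 1) * f (x (m + 1)) + ‖x (m + 1) - x m‖ ^ 2 / 2
          ≤ α (m + 1) * f (x (m + 1) + t • (z - x (m + 1)))
            + ‖(x (m + 1) + t • (z - x (m + 1))) - x m‖ ^ 2 / 2 :=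
        hmin _ (Set.mem_univ _)
      have hzt : x (m + 1) + t • (z - x (m + 1)) = (1 - t) • x (m + 1) + t • z := by
        module
      have h2 : f (x (m + 1) + t • (z - x (m + 1))) ≤ (1 - t) * f (x (m + 1)) + t * f z := by
        rw [hzt]
        exact hconv.2 (Set.mem_univ _) (Set.mem_univ _) (by linarith) ht.le (by ring)
      have h3 : ‖(x (m + 1) + t • (z - x (m + 1))) - x m‖ ^ 2
          = ‖x (m + 1) - x m‖ ^ 2
            + t * (2 * (inner ℝ (x (m + 1) - x m) (z - x (m + 1)) : ℝ))
            + t ^ 2 * Q := by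
        have hre : (x (m + 1) + t • (z - x (m + 1))) - x m
            = (x (m + 1) - x m) + t • (z - x (m + 1)) := by module
        rw [hre, norm_add_sq_real, real_inner_smul_right, norm_smul,
          Real.norm_eq_abs, mul_pow, sq_abs, hQdef]
        ring
      rw [h3] at h1
      have h4 := mul_le_mul_of_nonneg_left h2 hαp.le
      have h5 : 0 ≤ t * (K + t * (Q / 2)) := by
        rw [hK]
        nlinarith [h1, h4]
      nlinarith [h5, ht]
    have hK0 : 0 ≤ K := by
      have htend : Filter.Tendsto (fun t : ℝ => K + t * (Q / 2))
          (nhdsWithin 0 (Set.Ioi 0)) (nhds K) := by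
        have hc : Filter.Tendsto (fun t : ℝ => K + t * (Q / 2)) (nhds 0)
            (nhds (K + 0 * (Q / 2))) :=
          (continuous_const.add (continuous_id.mul continuous_const)).tendsto 0
        simpa using hc.mono_left nhdsWithin_le_nhds
      refine ge_of_tendsto htend ?_
      filter_upwards [Ioc_mem_nhdsGT_of_mem (Set.left_mem_Ico.mpr one_pos)] with t ht
      exact hstep' t ht.1 ht.2
    have hneg : x m - x (m + 1) = -(x (m + 1) - x m) := by module
    rw [hneg, inner_neg_left]
    rw [hK] at hK0
    linarith
  -- the per-step potential inequality
  have step : ∀ m : ℕ, m + 1 ≤ N →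
      s (m + 1) / (2 * L - s (m + 1)) * (f (x (m + 1)) - f xstar)
        + (L - s (m + 1)) / (2 * L - s (m + 1)) ^ 2 * ‖x (m + 1) - xstar‖ ^ 2
      ≤ s m / (2 * L - s m) * (f (x m) - f xstar)
        + (L - s m) / (2 * L - s m) ^ 2 * ‖x m - xstar‖ ^ 2 := by
    intro m hm
    have hb := hstep m hm
    rw [hb]
    set a : ℝ := s m with hadef
    set w : ℝ := α (m + 1) with hwdef
    have hαp : 0 < w := hα _ (Finset.mem_Icc.mpr ⟨Nat.succ_le_succ (Nat.zero_le m), hm⟩)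
    have ha0 : 0 ≤ a := hsnn m (le_trans (Nat.le_succ m) hm)
    have hbL : a + w ≤ L := by
      have h := hsmono (m + 1) hm
      rw [hb] at h; exact h
    have haL : a < L := by linarith
    have h2La : 0 < 2 * L - a := by linarith
    have h2Lb : 0 < 2 * L - (a + w) := by linarith
    set d := x m - x (m + 1) with hddef
    set e := x (m + 1) - xstar with hedef
    have hI : w * (f (x (m + 1)) - f xstar) ≤ (inner ℝ d e : ℝ) := by
      have hk := key m hm xstar
      have hsub : xstar - x (m + 1) = -e := by rw [hedef]; module
      rw [hsub, inner_neg_right] at hk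
      linarith
    have hJ : ‖d‖ ^ 2 ≤ w * (f (x m) - f (x (m + 1))) := by
      have hk := key m hm (x m)
      rwa [real_inner_self_eq_norm_sq] at hk
    have hxm : x m - xstar = e + d := by rw [hedef, hddef]; module
    set c0 : ℝ := (L - a) / (2 * L - a) ^ 2 with hc0def
    set c1 : ℝ := (L - (a + w)) / (2 * L - (a + w)) ^ 2 with hc1def
    set μ0 : ℝ := a / ((2 * L - a) * w) with hμ0def
    set μ1 : ℝ := 2 * L / ((2 * L - (a + w)) * (2 * L - a)) with hμ1def
    have hμ0 : 0 ≤ μ0 := by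
      rw [hμ0def]; exact div_nonneg ha0 (mul_pos h2La hαp).le
    have hμ1 : 0 ≤ μ1 := by
      rw [hμ1def]; exact div_nonneg (by linarith) (mul_pos h2Lb h2La).le
    set B : ℝ := c0 - μ1 / 2 with hBdef
    set C : ℝ := c0 + μ0 with hCdef
    have hC : 0 < C := by
      have hc0 : 0 < c0 := by
        rw [hc0def]; exact div_pos (by linarith) (by positivity)
      rw [hCdef]; linarith
    have hID : B ^ 2 = (c0 - c1) * C := by
      rw [hBdef, hCdef, hc0def, hc1def, hμ0def, hμ1def]
      have h1 := h2La.ne'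
      have h2 := h2Lb.ne'
      have h3 := hαp.ne'
      rw [div_add_div _ _ (pow_ne_zero 2 h1) (mul_ne_zero h1 h3), div_sub_div _ _ (pow_ne_zero 2 h1) (pow_ne_zero 2 h2),
        div_div, div_sub_div _ _ (pow_ne_zero 2 h1) (mul_ne_zero (mul_ne_zero h2 h1) two_ne_zero), div_pow, div_mul_div_comm,
        div_eq_div_iff (by positivity) (by simp [h1, h2, h3])]
      ring
    have hsq : 0 ≤ B ^ 2 * ‖e‖ ^ 2 + 2 * (B * C) * (inner ℝ d e : ℝ) + C ^ 2 * ‖d‖ ^ 2 := by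
      have h0 : (0:ℝ) ≤ ‖B • e + C • d‖ ^ 2 := sq_nonneg _
      have hexp : ‖B • e + C • d‖ ^ 2
          = B ^ 2 * ‖e‖ ^ 2 + 2 * (B * C) * (inner ℝ d e : ℝ) + C ^ 2 * ‖d‖ ^ 2 := by
        rw [norm_add_sq_real, real_inner_smul_left, real_inner_smul_right,
          norm_smul, norm_smul, Real.norm_eq_abs, Real.norm_eq_abs,
          mul_pow, mul_pow, sq_abs, sq_abs, real_inner_comm d e]
        ring
      rw [hexp] at h0
      exact h0
    have hkey2 : 0 ≤ (c0 - c1) * ‖e‖ ^ 2 + 2 * B * (inner ℝ d e : ℝ) + C * ‖d‖ ^ 2 := by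
      have h2 : 0 ≤ C * ((c0 - c1) * ‖e‖ ^ 2 + 2 * B * (inner ℝ d e : ℝ) + C * ‖d‖ ^ 2) := by
        have heq : C * ((c0 - c1) * ‖e‖ ^ 2 + 2 * B * (inner ℝ d e : ℝ) + C * ‖d‖ ^ 2)
            = B ^ 2 * ‖e‖ ^ 2 + 2 * (B * C) * (inner ℝ d e : ℝ) + C ^ 2 * ‖d‖ ^ 2 := by
          rw [hID]; ring
        rw [heq]; exact hsq
      by_contra hcon
      push_neg at hcon
      nlinarith [mul_pos hC (neg_pos.mpr hcon)]
    have hlam1 : (a + w) / (2 * L - (a + w)) = a / (2 * L - a) + μ1 * w := by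
      rw [hμ1def]
      field_simp
      ring
    have hlam0 : a / (2 * L - a) = μ0 * w := by
      rw [hμ0def]
      field_simp
    rw [hxm, norm_add_sq_real, real_inner_comm d e, hlam1, hlam0]
    have t1 := mul_le_mul_of_nonneg_left hI hμ1
    have t2 := mul_le_mul_of_nonneg_left hJ hμ0
    rw [hBdef, hCdef] at hkey2
    nlinarith [t1, t2, hkey2]
  -- telescoping
  have tele : ∀ m, m ≤ N →
      s m / (2 * L - s m) * (f (x m) - f xstar)
        + (L - s m) / (2 * L - s m) ^ 2 * ‖x m - xstar‖ ^ 2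
      ≤ s 0 / (2 * L - s 0) * (f (x 0) - f xstar)
        + (L - s 0) / (2 * L - s 0) ^ 2 * ‖x 0 - xstar‖ ^ 2 := by
    intro m
    induction m with
    | zero => intro _; exact le_refl _
    | succ k ih =>
      intro hk
      exact le_trans (step k hk) (ih (le_trans (Nat.le_succ k) hk))
  have hfinal := tele N (le_refl N)
  rw [hsN, hs0] at hfinal
  have e1 : L / (2 * L - L) = 1 := by
    rw [show 2 * L - L = L by ring, div_self hL.ne']
  have e2 : (L - L) / (2 * L - L) ^ 2 = 0 := by
    rw [show L - L = (0:ℝ) by ring, zero_div]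
  have e3 : (0:ℝ) / (2 * L - 0) = 0 := zero_div _
  have e4 : (L - 0) / (2 * L - 0) ^ 2 = 1 / (4 * L) := by
    field_simp
    ring
  rw [e1, e2, e3, e4] at hfinal
  have hnorm : ‖x 0 - xstar‖ ^ 2 ≤ R ^ 2 := pow_le_pow_left₀ (norm_nonneg _) hx0 2
  have hmul : 1 / (4 * L) * ‖x 0 - xstar‖ ^ 2 ≤ R ^ 2 / (4 * L) := by
    rw [div_mul_eq_mul_div, one_mul]
    exact (div_le_div_iff_of_pos_right (by linarith : (0:ℝ) < 4 * L)).mpr hnorm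
  linarith [hfinal, hmul]
end

section
/- For the one-dimensional function f(x) = R|x| / (2 Σ_{i=1}^N α_i) started at x_0 = −R, the final PPA iterate x_N satisfies f(x_N) − f(0) = R² / (4 Σ_{i=1}^N α_i), i.e., the function-value bound R²/(4 Σ α_i) is attained with equality. -/
lemma prox_abs_aux (a p z : ℝ) (ha : 0 < a) (h : p + a ≤ 0)
    (hz : IsMinOn (fun y => a * |y| + (y - p) ^ 2 / 2) Set.univ z) : z = p + a := by
  have h1 : a * |z| + (z - p) ^ 2 / 2 ≤ a * |p + a| + (p + a - p) ^ 2 / 2 :=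
    isMinOn_iff.mp hz (p + a) (Set.mem_univ _)
  rw [abs_of_nonpos h] at h1
  have h3 : -z ≤ |z| := neg_le_abs z
  nlinarith [sq_nonneg (z - p - a)]

/-- Tightness of the function-value bound: for the one-dimensional function
`f(x) = R|x|/(2 α_{1:N})` started at `x_0 = -R`, the final PPA iterate satisfies
`f(x_N) - f(0) = R²/(4 Σ α_i)`. -/
theorem stmt7 (N : ℕ) (hN : 1 ≤ N) (α : ℕ → ℝ)
    (hα : ∀ i ∈ Finset.Icc 1 N, 0 < α i)
    (R : ℝ) (hR : 0 < R) (f : ℝ → ℝ)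
    (hf : ∀ y, f y = R * |y| / (2 * ∑ k ∈ Finset.Icc 1 N, α k))
    (x : ℕ → ℝ) (hx0 : x 0 = -R)
    (hiter : ∀ i ∈ Finset.Icc 1 N,
      IsMinOn (fun y => α i * f y + (y - x (i - 1)) ^ 2 / 2) Set.univ (x i)) :
    f (x N) - f 0 = R ^ 2 / (4 * ∑ k ∈ Finset.Icc 1 N, α k) := by
  have hS0 : 0 < ∑ k ∈ Finset.Icc 1 N, α k :=
    Finset.sum_pos hα ⟨1, Finset.mem_Icc.mpr ⟨le_refl 1, hN⟩⟩
  set S := ∑ k ∈ Finset.Icc 1 N, α k with hSdef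
  have key : ∀ i, i ≤ N →
      x i = -R + R / (2 * S) * ∑ k ∈ Finset.Icc 1 i, α k := by
    intro i
    induction i with
    | zero => intro _; simp [hx0]
    | succ j ih =>
      intro hjN
      have hxj := ih (by omega)
      have hmem : j + 1 ∈ Finset.Icc 1 N := Finset.mem_Icc.mpr ⟨by omega, hjN⟩
      have hαj := hα _ hmem
      have hmin := hiter (j + 1) hmem
      have ha : 0 < α (j + 1) * (R / (2 * S)) := by positivity
      have hfun : (fun y => α (j + 1) * f y + (y - x (j + 1 - 1)) ^ 2 / 2)
          = fun y => (α (j + 1) * (R / (2 * S))) * |y| + (y - x j) ^ 2 / 2 := by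
        funext y
        simp only [hf, ← hSdef, Nat.add_sub_cancel]
        ring
      rw [hfun] at hmin
      have hsum_le : ∑ k ∈ Finset.Icc 1 (j + 1), α k ≤ S := by
        rw [hSdef]
        exact Finset.sum_le_sum_of_subset_of_nonneg
          (Finset.Icc_subset_Icc_right hjN) (fun k hk _ => (hα k hk).le)
      have hsum_top : ∑ k ∈ Finset.Icc 1 (j + 1), α k
          = (∑ k ∈ Finset.Icc 1 j, α k) + α (j + 1) :=
        Finset.sum_Icc_succ_top (by omega) α
      have hcond : x j + α (j + 1) * (R / (2 * S)) ≤ 0 := by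
        rw [hxj]
        have h2 : R / (2 * S) * ∑ k ∈ Finset.Icc 1 (j + 1), α k ≤ R / (2 * S) * S :=
          mul_le_mul_of_nonneg_left hsum_le (by positivity)
        rw [hsum_top] at h2
        have h3 : R / (2 * S) * S = R / 2 := by field_simp
        nlinarith
      have hz := prox_abs_aux _ _ _ ha hcond hmin
      rw [hz, hxj, hsum_top]; ring
  have hxN := key N le_rfl
  rw [← hSdef] at hxN
  have hxNval : x N = -(R / 2) := by rw [hxN]; field_simp; ring
  rw [hf, hf, hxNval, abs_of_nonpos (by linarith : -(R/2) ≤ 0)]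
  simp only [← hSdef, abs_zero]
  field_simp
  ring
end

section
/- Let N ≥ 2, let α_1, ..., α_N be positive reals with separator s = N (i.e., α_{1:N−1} ≤ α_N and thus α_N ≥ α_{1:N−1}), and let x_0, ..., x_N ∈ ℝⁿ. Then −‖(x_{N−1}−x_N)/α_N‖² + ‖x_0‖²/α_{1:N}² + (2(α_N − α_{1:N−1})/(α_{1:N}α_N))⟨(x_{N−1}−x_N)/α_N, −x_N⟩ + 2 Σ_{i=1}^{N−1}[ (α_i/(α_{i:N}α_{i+1:N}))⟨(x_{i−1}−x_i)/α_i, −x_i⟩ + (α_{1:i}/(α_{1:N}α_{i+1:N}))⟨(x_i−x_{i+1})/α_{i+1}, x_i−x_{i+1}⟩ ] equals ‖x_0/α_{1:N} − x_1/α_{2:N}‖² + Σ_{i=1}^{N−2} ((α_{i+1}α_{1:N} + 2α_{1:i}α_{i+2:N})/(α_{1:N}α_{i+1})) ‖x_i/α_{i+1:N} − x_{i+1}/α_{i+2:N}‖² + ((α_N − α_{1:N−1})/(α_{1:N}α_N²)) ‖x_N‖², and in particular this quantity is nonnegative. -/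
set_option maxHeartbeats 1000000

private lemma tele_sum (g : ℕ → ℝ) : ∀ m : ℕ, ∑ i ∈ Finset.Icc 1 m, (g i - g (i+1)) = g 1 - g (m+1)
  | 0 => by simp
  | (m+1) => by
      rw [Finset.sum_Icc_succ_top (by omega), tele_sum g m]; ring

private lemma scalar_id (N : ℕ) (hN : 2 ≤ N) (α : ℕ → ℝ) (S : ℕ → ℕ → ℝ)
    (hα : ∀ i, 1 ≤ i → i ≤ N → 0 < α i)
    (hSpos : ∀ i, 1 ≤ i → i ≤ N → 0 < S i N)
    (hSnn : ∀ i, 1 ≤ i → 0 ≤ S i N)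
    (hrec : ∀ i, 1 ≤ i → i ≤ N → S i N = α i + S (i+1) N)
    (htop : S (N+1) N = 0)
    (hsplit : ∀ i, i ≤ N → S 1 N = S 1 i + S (i+1) N)
    (P Q : ℕ → ℝ) :
    -(((α N)⁻¹)^2 * (P (N-1) - 2*Q (N-1) + P N)) + P 0 / (S 1 N)^2
      + 2 * (α N - S 1 (N-1)) / (S 1 N * α N) * ((α N)⁻¹ * (P N - Q (N-1)))
      + 2 * ∑ i ∈ Finset.Icc 1 (N-1),
          (α i / (S i N * S (i+1) N) * ((α i)⁻¹ * (P i - Q (i-1)))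
            + S 1 i / (S 1 N * S (i+1) N) * ((α (i+1))⁻¹ * (P i - 2*Q i + P (i+1))))
      =
      (((S 1 N)⁻¹)^2 * P 0 - 2*(S 1 N)⁻¹*(S 2 N)⁻¹*Q 0 + ((S 2 N)⁻¹)^2 * P 1)
        + ∑ i ∈ Finset.Icc 1 (N-2),
            (α (i+1) * S 1 N + 2 * S 1 i * S (i+2) N) / (S 1 N * α (i+1)) *
              (((S (i+1) N)⁻¹)^2 * P i - 2*(S (i+1) N)⁻¹*(S (i+2) N)⁻¹*Q i
                + ((S (i+2) N)⁻¹)^2 * P (i+1))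
        + (α N - S 1 (N-1)) / (S 1 N * (α N)^2) * P N := by
  set c : ℕ → ℝ := fun i => (α (i+1) * S 1 N + 2 * S 1 i * S (i+2) N) / (S 1 N * α (i+1)) with hc
  set u : ℕ → ℝ := fun i => 2/(S i N * S (i+1) N) + 2*S 1 i/(S 1 N * S (i+1) N * α (i+1))
      - c i/(S (i+1) N)^2 with hu
  set v : ℕ → ℝ := fun i => -2/(S i N * S (i+1) N) with hv
  set G : ℕ → ℝ := fun i => u i * P i + v i * Q (i-1) with hG
  set tL : ℕ → ℝ := fun i => α i / (S i N * S (i+1) N) * ((α i)⁻¹ * (P i - Q (i-1)))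
      + S 1 i / (S 1 N * S (i+1) N) * ((α (i+1))⁻¹ * (P i - 2*Q i + P (i+1))) with htL
  set sR : ℕ → ℝ := fun i => c i *
      (((S (i+1) N)⁻¹)^2 * P i - 2*(S (i+1) N)⁻¹*(S (i+2) N)⁻¹*Q i
        + ((S (i+2) N)⁻¹)^2 * P (i+1)) with hsR
  have hA1 : S 1 1 = α 1 := by
    have h1 := hsplit 1 (by omega); have h2 := hrec 1 (by omega) (by omega); linarith
  have hArec : ∀ i, i + 1 ≤ N → S 1 (i+1) = S 1 i + α (i+1) := by
    intro i h2
    have e1 := hsplit i (by omega)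
    have e2 := hsplit (i+1) h2
    have e3 := hrec (i+1) (by omega) h2
    linarith
  have hSNN : S N N = α N := by
    have h1 := hrec N (by omega) (le_refl N); rw [htop] at h1; linarith
  have hb : S 1 N = S 1 (N-1) + α N := by
    have h1 := hsplit (N-1) (by omega)
    rw [show N-1+1 = N from by omega, hSNN] at h1; exact h1
  have h1N : S 1 N = α 1 + S 2 N := hrec 1 (by omega) (by omega)
  have h2N : S 2 N = α 2 + S 3 N := hrec 2 (by omega) hN
  have hmid : ∀ i ∈ Finset.Icc 1 (N-2), 2 * tL i = sR i + (G i - G (i+1)) := by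
    intro i hi
    simp only [Finset.mem_Icc] at hi
    obtain ⟨hi1, hi2⟩ := hi
    have ne1 : α i ≠ 0 := (hα i hi1 (by omega)).ne'
    have ne2 : α (i+1) ≠ 0 := (hα (i+1) (by omega) (by omega)).ne'
    have ne3 : α (i+2) ≠ 0 := (hα (i+2) (by omega) (by omega)).ne'
    have ne4 : S i N ≠ 0 := (hSpos i hi1 (by omega)).ne'
    have ne5 : S (i+1) N ≠ 0 := (hSpos (i+1) (by omega) (by omega)).ne'
    have ne6 : S (i+2) N ≠ 0 := (hSpos (i+2) (by omega) (by omega)).ne'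
    have ne7 : S 1 N ≠ 0 := (hSpos 1 (by omega) (by omega)).ne'
    have r1 : S (i+1) N = α (i+1) + S (i+2) N := hrec (i+1) (by omega) (by omega)
    have r2 : S (i+2) N = α (i+2) + S (i+3) N := hrec (i+2) (by omega) (by omega)
    have r3 : S 1 N = S 1 i + S (i+1) N := hsplit i (by omega)
    have r4 : S 1 (i+1) = S 1 i + α (i+1) := hArec i (by omega)
    simp only [htL, hsR, hG, hu, hv, hc, Nat.add_sub_cancel,
      show i+1+1 = i+2 from rfl, show i+1+2 = i+3 from rfl]
    have hP : 2*(α i/(S i N * S (i+1) N)*(α i)⁻¹) + 2*S 1 i/(S 1 N * S (i+1) N * α (i+1))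
        = (α (i+1) * S 1 N + 2 * S 1 i * S (i+2) N) / (S 1 N * α (i+1))*((S (i+1) N)⁻¹)^2
          + (2/(S i N * S (i+1) N) + 2*S 1 i/(S 1 N * S (i+1) N * α (i+1))
            - (α (i+1) * S 1 N + 2 * S 1 i * S (i+2) N) / (S 1 N * α (i+1))/(S (i+1) N)^2) := by
      field_simp; ring
    have hQm : 2*(α i/(S i N * S (i+1) N)*(α i)⁻¹) = 2/(S i N * S (i+1) N) := by
      field_simp
    have hQi : -4*S 1 i/(S 1 N * S (i+1) N * α (i+1))
        = (α (i+1) * S 1 N + 2 * S 1 i * S (i+2) N) / (S 1 N * α (i+1))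
            *(-2*(S (i+1) N)⁻¹*(S (i+2) N)⁻¹) + 2/(S (i+1) N * S (i+2) N) := by
      field_simp; ring
    have hP1 : 2*S 1 i/(S 1 N * S (i+1) N * α (i+1))
        = (α (i+1) * S 1 N + 2 * S 1 i * S (i+2) N) / (S 1 N * α (i+1))*((S (i+2) N)⁻¹)^2
          - (2/(S (i+1) N * S (i+2) N) + 2*S 1 (i+1)/(S 1 N * S (i+2) N * α (i+2))
            - (α (i+2) * S 1 N + 2 * S 1 (i+1) * S (i+3) N) / (S 1 N * α (i+2))/(S (i+2) N)^2) := by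
      rw [r4, r3, r1, r2]
      have k1 : (0:ℝ) < α (i+2) + S (i+3) N := by
        have := hSnn (i+3) (by omega); have := hα (i+2) (by omega) (by omega); linarith
      have k2 : (0:ℝ) < α (i+1) + (α (i+2) + S (i+3) N) := by
        have := hα (i+1) (by omega) (by omega); linarith
      have k3 : (0:ℝ) < S 1 i + (α (i+1) + (α (i+2) + S (i+3) N)) := by
        rw [r1, r2] at r3
        have := hSpos 1 (by omega) (by omega); linarith
      have k1' := k1.ne'
      have k2' := k2.ne'
      have k3' := k3.ne'
      field_simp
      ring
    linear_combination P i * hP - Q (i-1) * hQm + Q i * hQi + P (i+1) * hP1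
  -- boundary identity
  have kk1 : N - 1 + 1 = N := by omega
  have kk2 : N - 1 + 2 = N + 1 := by omega
  have kk3 : N - 1 - 1 = N - 2 := by omega
  have neN : α N ≠ 0 := (hα N (by omega) (by omega)).ne'
  have neN1 : α (N-1) ≠ 0 := (hα (N-1) (by omega) (by omega)).ne'
  have neTN1 : S (N-1) N ≠ 0 := (hSpos (N-1) (by omega) (by omega)).ne'
  have neT : S 1 N ≠ 0 := (hSpos 1 (by omega) (by omega)).ne'
  have hT' : (0:ℝ) < S 1 (N-1) + α N := by
    have h1 := hSpos 1 (by omega) (by omega); rw [hb] at h1; exact h1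
  have hbd : -(((α N)⁻¹)^2 * (P (N-1) - 2*Q (N-1) + P N)) + P 0 / (S 1 N)^2
      + 2 * (α N - S 1 (N-1)) / (S 1 N * α N) * ((α N)⁻¹ * (P N - Q (N-1)))
      + 2 * tL (N-1) + (G 1 - G (N-1))
      = (((S 1 N)⁻¹)^2 * P 0 - 2*(S 1 N)⁻¹*(S 2 N)⁻¹*Q 0 + ((S 2 N)⁻¹)^2 * P 1)
        + (α N - S 1 (N-1)) / (S 1 N * (α N)^2) * P N := by
    simp only [htL, hG, hu, hv, hc, kk1, kk2, kk3,
      show (1:ℕ)+1 = 2 from rfl, show (1:ℕ)+2 = 3 from rfl, show (1:ℕ)-1 = 0 from rfl]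
    have cP1 : 2/(S 1 N * S 2 N) + 2*S 1 1/(S 1 N * S 2 N * α 2)
        - (α 2 * S 1 N + 2 * S 1 1 * S 3 N) / (S 1 N * α 2)/(S 2 N)^2
        = ((S 2 N)⁻¹)^2 := by
      rw [hA1, h1N, h2N]
      have k1 : (0:ℝ) < α 2 + S 3 N := by
        have := hSnn 3 (by omega); have := hα 2 (by omega) (by omega); linarith
      have k2 : (0:ℝ) < α 1 + (α 2 + S 3 N) := by
        have := hα 1 (by omega) (by omega); linarith
      have k1' := k1.ne'
      have k2' := k2.ne'
      have ne1'' : α 1 ≠ 0 := (hα 1 (by omega) (by omega)).ne'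
      have ne2'' : α 2 ≠ 0 := (hα 2 (by omega) (by omega)).ne'
      field_simp
      ring
    have cQN2 : 2*(α (N-1)/(S (N-1) N * S N N)*(α (N-1))⁻¹) = 2/(S (N-1) N * S N N) := by
      have neTN : S N N ≠ 0 := (hSpos N (by omega) (by omega)).ne'
      field_simp
    have cPN1 : 2*(α (N-1)/(S (N-1) N * S N N)*(α (N-1))⁻¹)
          + 2*(S 1 (N-1)/(S 1 N * S N N)*(α N)⁻¹)
        = ((α N)⁻¹)^2 + (2/(S (N-1) N * S N N) + 2*S 1 (N-1)/(S 1 N * S N N * α N)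
            - (α N * S 1 N + 2 * S 1 (N-1) * S (N+1) N) / (S 1 N * α N)/(S N N)^2) := by
      rw [htop, hSNN, hb]
      have k' := hT'.ne'
      field_simp
      ring
    have cQN1 : 2*((α N)⁻¹)^2
        = 2 * (α N - S 1 (N-1)) / (S 1 N * α N) * (α N)⁻¹
          + 4*(S 1 (N-1)/(S 1 N * S N N)*(α N)⁻¹) := by
      rw [hSNN, hb]
      have k' := hT'.ne'
      field_simp
      ring
    have cPN : 2 * (α N - S 1 (N-1)) / (S 1 N * α N) * (α N)⁻¹
          + 2*(S 1 (N-1)/(S 1 N * S N N)*(α N)⁻¹)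
        = ((α N)⁻¹)^2 + (α N - S 1 (N-1)) / (S 1 N * (α N)^2) := by
      rw [hSNN, hb]
      have k' := hT'.ne'
      field_simp
      ring
    linear_combination P 1 * cP1 - Q (N-2) * cQN2 + P (N-1) * cPN1 + Q (N-1) * cQN1 + P N * cPN
  -- assembly
  have hsum1 : (∑ i ∈ Finset.Icc 1 (N-1), tL i) = (∑ i ∈ Finset.Icc 1 (N-2), tL i) + tL (N-1) := by
    rw [show N-1 = N-2+1 from by omega, Finset.sum_Icc_succ_top (by omega) tL]
  have hsum3 : 2 * (∑ i ∈ Finset.Icc 1 (N-2), tL i)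
      = (∑ i ∈ Finset.Icc 1 (N-2), sR i) + (G 1 - G (N-1)) := by
    rw [Finset.mul_sum, Finset.sum_congr rfl hmid, Finset.sum_add_distrib,
      tele_sum G (N-2), show N-2+1 = N-1 from by omega]
  rw [hsum1]
  linear_combination hbd + hsum3

open scoped RealInnerProductSpace

/-- Sum-of-squares certificate for the case `s = N` (i.e. `α_{1:N-1} ≤ α_N`):
the aggregated quantity equals an explicit nonnegative combination of squared
norms; in particular it is nonnegative. -/
theorem stmt10 {n : ℕ} (N : ℕ) (hN : 2 ≤ N) (α : ℕ → ℝ)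
    (hα : ∀ i ∈ Finset.Icc 1 N, 0 < α i)
    (S : ℕ → ℕ → ℝ) (hS : ∀ i j, S i j = ∑ k ∈ Finset.Icc i j, α k)
    (hsep : S 1 (N - 1) ≤ α N)
    (x : ℕ → EuclideanSpace ℝ (Fin n)) :
    (-‖(α N)⁻¹ • (x (N - 1) - x N)‖ ^ 2 + ‖x 0‖ ^ 2 / (S 1 N) ^ 2
      + 2 * (α N - S 1 (N - 1)) / (S 1 N * α N) *
          ⟪(α N)⁻¹ • (x (N - 1) - x N), -(x N)⟫
      + 2 * ∑ i ∈ Finset.Icc 1 (N - 1),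
          (α i / (S i N * S (i + 1) N) * ⟪(α i)⁻¹ • (x (i - 1) - x i), -(x i)⟫
            + S 1 i / (S 1 N * S (i + 1) N) *
              ⟪(α (i + 1))⁻¹ • (x i - x (i + 1)), x i - x (i + 1)⟫)
      =
      ‖(S 1 N)⁻¹ • x 0 - (S 2 N)⁻¹ • x 1‖ ^ 2
        + ∑ i ∈ Finset.Icc 1 (N - 2),
            (α (i + 1) * S 1 N + 2 * S 1 i * S (i + 2) N) / (S 1 N * α (i + 1)) *
              ‖(S (i + 1) N)⁻¹ • x i - (S (i + 2) N)⁻¹ • x (i + 1)‖ ^ 2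
        + (α N - S 1 (N - 1)) / (S 1 N * (α N) ^ 2) * ‖x N‖ ^ 2) ∧
    0 ≤ -‖(α N)⁻¹ • (x (N - 1) - x N)‖ ^ 2 + ‖x 0‖ ^ 2 / (S 1 N) ^ 2
      + 2 * (α N - S 1 (N - 1)) / (S 1 N * α N) *
          ⟪(α N)⁻¹ • (x (N - 1) - x N), -(x N)⟫
      + 2 * ∑ i ∈ Finset.Icc 1 (N - 1),
          (α i / (S i N * S (i + 1) N) * ⟪(α i)⁻¹ • (x (i - 1) - x i), -(x i)⟫
            + S 1 i / (S 1 N * S (i + 1) N) *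
              ⟪(α (i + 1))⁻¹ • (x i - x (i + 1)), x i - x (i + 1)⟫) := by
  -- basic facts about S
  have hα' : ∀ i, 1 ≤ i → i ≤ N → 0 < α i := fun i h1 h2 =>
    hα i (by simp [Finset.mem_Icc]; omega)
  have hSpos : ∀ i, 1 ≤ i → i ≤ N → 0 < S i N := by
    intro i h1 h2; rw [hS]
    apply Finset.sum_pos
    · intro k hk; simp [Finset.mem_Icc] at hk; exact hα' k (by omega) (by omega)
    · exact ⟨i, by simp [Finset.mem_Icc]; omega⟩
  have hSnn : ∀ i, 1 ≤ i → 0 ≤ S i N := by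
    intro i h1; rw [hS]; apply Finset.sum_nonneg
    intro k hk; simp [Finset.mem_Icc] at hk; exact (hα' k (by omega) (by omega)).le
  have hS1nn : ∀ i, i ≤ N → 0 ≤ S 1 i := by
    intro i hi; rw [hS]; apply Finset.sum_nonneg
    intro k hk; simp [Finset.mem_Icc] at hk; exact (hα' k (by omega) (by omega)).le
  have hrec : ∀ i, 1 ≤ i → i ≤ N → S i N = α i + S (i+1) N := by
    intro i h1 h2
    rw [hS, hS]
    have hins : Finset.Icc i N = insert i (Finset.Icc (i+1) N) := by
      ext k; simp [Finset.mem_Icc]; omega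
    rw [hins, Finset.sum_insert (by simp [Finset.mem_Icc])]
  have htop : S (N+1) N = 0 := by
    rw [hS, Finset.Icc_eq_empty (by omega), Finset.sum_empty]
  have hsplit : ∀ i, i ≤ N → S 1 N = S 1 i + S (i+1) N := by
    intro i hi
    rw [hS, hS, hS]
    have e1 : Finset.Icc 1 N = Finset.Ioc 0 N := by
      ext k; simp [Finset.mem_Icc, Finset.mem_Ioc]; omega
    have e2 : Finset.Icc 1 i = Finset.Ioc 0 i := by
      ext k; simp [Finset.mem_Icc, Finset.mem_Ioc]; omega
    have e3 : Finset.Icc (i+1) N = Finset.Ioc i N := by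
      ext k; simp [Finset.mem_Icc, Finset.mem_Ioc]
    rw [e1, e2, e3]
    exact (Finset.sum_Ioc_consecutive _ (Nat.zero_le i) hi).symm
  -- expansion lemmas
  have exp1 : ∀ (r : ℝ) (a b : EuclideanSpace ℝ (Fin n)),
      ‖r • (a - b)‖ ^ 2 = r^2 * (‖a‖^2 - 2*⟪a, b⟫ + ‖b‖^2) := by
    intro r a b
    rw [norm_smul, mul_pow, ← norm_sub_sq_real]
    simp [sq_abs]
  have exp2 : ∀ (r : ℝ) (a b : EuclideanSpace ℝ (Fin n)),
      ⟪r • (a - b), -b⟫ = r * (‖b‖^2 - ⟪a, b⟫) := by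
    intro r a b
    rw [real_inner_smul_left, inner_neg_right, inner_sub_left, real_inner_self_eq_norm_sq]
    ring
  have exp3 : ∀ (r : ℝ) (a b : EuclideanSpace ℝ (Fin n)),
      ⟪r • (a - b), a - b⟫ = r * (‖a‖^2 - 2*⟪a, b⟫ + ‖b‖^2) := by
    intro r a b
    rw [real_inner_smul_left, inner_sub_left, inner_sub_right, inner_sub_right,
      real_inner_self_eq_norm_sq, real_inner_self_eq_norm_sq, real_inner_comm b a]
    ring
  have exp4 : ∀ (r s : ℝ) (a b : EuclideanSpace ℝ (Fin n)),
      ‖r • a - s • b‖ ^ 2 = r^2 * ‖a‖^2 - 2*r*s*⟪a, b⟫ + s^2*‖b‖^2 := by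
    intro r s a b
    rw [norm_sub_sq_real, norm_smul, norm_smul, real_inner_smul_left, real_inner_smul_right,
      mul_pow, mul_pow]
    simp [sq_abs]; ring
  -- the scalar identity
  have key := scalar_id N hN α S hα' hSpos hSnn hrec htop hsplit
    (fun i => ‖x i‖^2) (fun i => ⟪x i, x (i+1)⟫)
  beta_reduce at key
  rw [show N-1+1 = N from by omega, show (0:ℕ)+1 = 1 from rfl] at key
  have hEq : (-‖(α N)⁻¹ • (x (N - 1) - x N)‖ ^ 2 + ‖x 0‖ ^ 2 / (S 1 N) ^ 2
      + 2 * (α N - S 1 (N - 1)) / (S 1 N * α N) *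
          ⟪(α N)⁻¹ • (x (N - 1) - x N), -(x N)⟫
      + 2 * ∑ i ∈ Finset.Icc 1 (N - 1),
          (α i / (S i N * S (i + 1) N) * ⟪(α i)⁻¹ • (x (i - 1) - x i), -(x i)⟫
            + S 1 i / (S 1 N * S (i + 1) N) *
              ⟪(α (i + 1))⁻¹ • (x i - x (i + 1)), x i - x (i + 1)⟫)
      =
      ‖(S 1 N)⁻¹ • x 0 - (S 2 N)⁻¹ • x 1‖ ^ 2
        + ∑ i ∈ Finset.Icc 1 (N - 2),
            (α (i + 1) * S 1 N + 2 * S 1 i * S (i + 2) N) / (S 1 N * α (i + 1)) *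
              ‖(S (i + 1) N)⁻¹ • x i - (S (i + 2) N)⁻¹ • x (i + 1)‖ ^ 2
        + (α N - S 1 (N - 1)) / (S 1 N * (α N) ^ 2) * ‖x N‖ ^ 2) := by
    have hsumL : ∀ i ∈ Finset.Icc 1 (N-1),
        (α i / (S i N * S (i + 1) N) * ⟪(α i)⁻¹ • (x (i - 1) - x i), -(x i)⟫
          + S 1 i / (S 1 N * S (i + 1) N) *
            ⟪(α (i + 1))⁻¹ • (x i - x (i + 1)), x i - x (i + 1)⟫)
        = (α i / (S i N * S (i+1) N) * ((α i)⁻¹ * (‖x i‖^2 - ⟪x (i-1), x (i-1+1)⟫))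
          + S 1 i / (S 1 N * S (i+1) N) *
            ((α (i+1))⁻¹ * (‖x i‖^2 - 2*⟪x i, x (i+1)⟫ + ‖x (i+1)‖^2))) := by
      intro i hi
      simp only [Finset.mem_Icc] at hi
      rw [show i-1+1 = i from by omega, exp2, exp3]
    have hsumR : ∀ i ∈ Finset.Icc 1 (N-2),
        (α (i + 1) * S 1 N + 2 * S 1 i * S (i + 2) N) / (S 1 N * α (i + 1)) *
          ‖(S (i + 1) N)⁻¹ • x i - (S (i + 2) N)⁻¹ • x (i + 1)‖ ^ 2
        = (α (i + 1) * S 1 N + 2 * S 1 i * S (i + 2) N) / (S 1 N * α (i + 1)) *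
            (((S (i+1) N)⁻¹)^2 * ‖x i‖^2 - 2*(S (i+1) N)⁻¹*(S (i+2) N)⁻¹*⟪x i, x (i+1)⟫
              + ((S (i+2) N)⁻¹)^2 * ‖x (i+1)‖^2) := by
      intro i _
      rw [exp4]
    rw [exp1, exp2, exp4, Finset.sum_congr rfl hsumL, Finset.sum_congr rfl hsumR]
    exact key
  refine ⟨hEq, ?_⟩
  rw [hEq]
  have n2 := (hSpos 1 (by omega) (by omega)).le
  apply add_nonneg (add_nonneg (by positivity) ?_) ?_
  · apply Finset.sum_nonneg
    intro i hi
    simp only [Finset.mem_Icc] at hi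
    have n1 := (hα' (i+1) (by omega) (by omega)).le
    have n3 := hS1nn i (by omega)
    have n4 := hSnn (i+2) (by omega)
    apply mul_nonneg
    · apply div_nonneg
      · exact add_nonneg (mul_nonneg n1 n2) (mul_nonneg (mul_nonneg (by norm_num) n3) n4)
      · exact mul_nonneg n2 n1
    · positivity
  · apply mul_nonneg
    · apply div_nonneg
      · linarith [hsep]
      · exact mul_nonneg n2 (sq_nonneg _)
    · positivity
end

section
/- Let f be a proper closed convex function on ℝⁿ with minimizer 0, f(0) = 0, ‖x_0‖ ≤ 1, and let x_i = prox_{α_i f}(x_{i−1}) for positive step sizes α_i with subgradients g_i = (x_{i−1} − x_i)/α_i ∈ ∂f(x_i) and values f_i = f(x_i). Let s be the separator of (α_i). Then multiplying the interpolation inequalities (f_N ≥ 0; 0 ≥ f_i + ⟨g_i, −x_i⟩ for i ≤ s; f_i ≥ f_{i+1} + ⟨g_{i+1}, x_i − x_{i+1}⟩ for i ≤ N−1; f_{i+1} ≥ f_i + ⟨g_i, x_{i+1} − x_i⟩ for s ≤ i ≤ N−1; ‖x_0‖² ≤ 1) by the multipliers 2/α_{1:N}, 2α_i/(α_{i:N}α_{i+1:N})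 (i < s), 2(α_{s:N}−α_{1:s−1})/(α_{1:N}α_{s:N}) (i = s), 2α_{1:i}/(α_{1:N}α_{i+1:N}) (i < s), 2(α_{1:i}−α_{i+2:N})/(α_{1:N}α_{i+1}) (s ≤ i ≤ N−1), 2(α_{1:i}−α_{i+1:N})/(α_{1:N}α_{i+1}) (s ≤ i ≤ N−1), and 1/α_{1:N}² respectively, and summing, all function values f_i cancel and one obtains ‖g_N‖² ≤ 1/α_{1:N}². -/
open scoped RealInnerProductSpace

private def hS (α : ℕ → ℝ) (j : ℕ) : ℝ := ∑ k ∈ Finset.Ioc 0 j, α k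
private def tS (α : ℕ → ℝ) (N j : ℕ) : ℝ := ∑ k ∈ Finset.Ioc j N, α k

private lemma aux_subgrad {E : Type*} [NormedAddCommGroup E] [InnerProductSpace ℝ E]
    {f : E → ℝ} (hconv : ConvexOn ℝ Set.univ f) {c : ℝ} (hc : 0 < c) {y w : E}
    (hmin : IsMinOn (fun z => c * f z + ‖z - y‖ ^ 2 / 2) Set.univ w) (z : E) :
    ⟪y - w, z - w⟫ ≤ c * (f z - f w) := by
  have key : ∀ t : ℝ, 0 < t → t ≤ 1 →
      0 ≤ (c * (f z - f w) - ⟪y - w, z - w⟫) + t * (‖z - w‖ ^ 2 / 2) := by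
    intro t ht0 ht1
    have h1 : c * f w + ‖w - y‖ ^ 2 / 2 ≤
        c * f ((1 - t) • w + t • z) + ‖((1 - t) • w + t • z) - y‖ ^ 2 / 2 := by
      have := isMinOn_iff.mp hmin ((1 - t) • w + t • z) (Set.mem_univ _)
      simpa using this
    have h2 : f ((1 - t) • w + t • z) ≤ (1 - t) * f w + t * f z :=
      hconv.2 (Set.mem_univ w) (Set.mem_univ z) (by linarith) ht0.le (by ring)
    have h3 : ((1 - t) • w + t • z) - y = (w - y) + t • (z - w) := by
      rw [smul_sub, sub_smul, one_smul]; abel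
    have h4 : ‖((1 - t) • w + t • z) - y‖ ^ 2
        = ‖w - y‖ ^ 2 + 2 * (t * ⟪w - y, z - w⟫) + t ^ 2 * ‖z - w‖ ^ 2 := by
      rw [h3, norm_add_sq_real, real_inner_smul_right, norm_smul, Real.norm_eq_abs,
        mul_pow, sq_abs]
    have h5 : ⟪w - y, z - w⟫ = -⟪y - w, z - w⟫ := by
      rw [← inner_neg_left]; congr 1; abel
    have h6 : c * f ((1 - t) • w + t • z) ≤ c * ((1 - t) * f w + t * f z) :=
      mul_le_mul_of_nonneg_left h2 hc.le
    rw [h4, h5] at h1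
    have hmul : 0 ≤ t * ((c * (f z - f w) - ⟪y - w, z - w⟫) + t * (‖z - w‖ ^ 2 / 2)) := by
      nlinarith [h1, h6]
    nlinarith [hmul, ht0]
  have hD0 : 0 ≤ c * (f z - f w) - ⟪y - w, z - w⟫ := by
    by_contra hcon
    push_neg at hcon
    set D : ℝ := c * (f z - f w) - ⟪y - w, z - w⟫ with hDdef
    have hDneg : D < 0 := hcon
    set K : ℝ := ‖z - w‖ ^ 2 / 2 with hKdef
    have hK : 0 ≤ K := by positivity
    have hden : (0:ℝ) < 2 * K + 1 := by linarith
    set t : ℝ := min 1 (-D / (2 * K + 1)) with htdef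
    have ht0 : 0 < t := lt_min one_pos (div_pos (neg_pos.mpr hDneg) hden)
    have ht1 : t ≤ 1 := min_le_left _ _
    have h7 := key t ht0 ht1
    have ht2 : t ≤ -D / (2 * K + 1) := min_le_right _ _
    have h8 : t * (2 * K + 1) ≤ -D := (le_div_iff₀ hden).mp ht2
    nlinarith [h7, h8, mul_pos ht0 (show (0:ℝ) < K + 1 by linarith)]
  linarith

set_option maxHeartbeats 1000000 in
/-- The aggregated dual certificate: for the PPA on a proper closed convex `f`
with minimizer `0`, `f(0) = 0` and `‖x_0‖ ≤ 1`, combining the interpolation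
inequalities with the (separator-dependent) nonnegative multipliers yields
`‖g_N‖² ≤ 1/α_{1:N}²`. -/
theorem stmt12 {n : ℕ} (f : EuclideanSpace ℝ (Fin n) → ℝ)
    (hconv : ConvexOn ℝ Set.univ f) (hlsc : LowerSemicontinuous f)
    (hmin : ∀ z, f 0 ≤ f z) (h0 : f 0 = 0)
    (N s : ℕ) (hN : 1 ≤ N) (α : ℕ → ℝ) (hα : ∀ i ∈ Finset.Icc 1 N, 0 < α i)
    (hs1 : 1 ≤ s) (hsN : s ≤ N)
    (hsep1 : (∑ k ∈ Finset.Icc (s + 1) N, α k) < (∑ k ∈ Finset.Icc 1 s, α k))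
    (hsep2 : (∑ k ∈ Finset.Icc 1 (s - 1), α k) ≤ (∑ k ∈ Finset.Icc s N, α k))
    (x : ℕ → EuclideanSpace ℝ (Fin n)) (hx0 : ‖x 0‖ ≤ 1)
    (hiter : ∀ i ∈ Finset.Icc 1 N,
      IsMinOn (fun z => α i * f z + ‖z - x (i - 1)‖ ^ 2 / 2) Set.univ (x i)) :
    ‖(α N)⁻¹ • (x (N - 1) - x N)‖ ^ 2 ≤ 1 / (∑ k ∈ Finset.Icc 1 N, α k) ^ 2 := by
  obtain ⟨t, rfl⟩ : ∃ t, s = t + 1 := ⟨s - 1, by omega⟩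
  set T : ℝ := ∑ k ∈ Finset.Icc 1 N, α k with hTdef
  set g : ℕ → EuclideanSpace ℝ (Fin n) := fun i => (α i)⁻¹ • (x (i - 1) - x i) with hgdef
  have hαpos : ∀ i, 1 ≤ i → i ≤ N → 0 < α i := fun i h1 h2 => hα i (Finset.mem_Icc.mpr ⟨h1, h2⟩)
  have htS0 : tS α N 0 = T := by
    rw [tS, hTdef, ← Finset.Icc_add_one_left_eq_Ioc]; rfl
  have hhS0 : hS α 0 = 0 := by simp [hS]
  have htSN : tS α N N = 0 := by simp [tS]
  have hsum : ∀ j, j ≤ N → hS α j + tS α N j = T := by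
    intro j hj
    rw [hS, tS, ← htS0, tS]
    exact Finset.sum_Ioc_consecutive α (Nat.zero_le j) hj
  have hBsucc : ∀ j, hS α (j + 1) = hS α j + α (j + 1) := by
    intro j
    rw [hS, hS]
    exact Finset.sum_Ioc_succ_top (Nat.zero_le j) α
  have hAsucc : ∀ j, j < N → tS α N j = α (j + 1) + tS α N (j + 1) := by
    intro j hj
    have h1 := hsum j hj.le
    have h2 := hsum (j + 1) hj
    have h3 := hBsucc j
    linarith
  have hApos : ∀ j, j < N → 0 < tS α N j := by
    intro j hj
    rw [tS]
    apply Finset.sum_pos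
    · intro k hk
      rw [Finset.mem_Ioc] at hk
      exact hαpos k (by omega) hk.2
    · exact ⟨N, Finset.mem_Ioc.mpr ⟨hj, le_refl N⟩⟩
  have hAnonneg : ∀ j, 0 ≤ tS α N j := by
    intro j
    rw [tS]
    apply Finset.sum_nonneg
    intro k hk
    rw [Finset.mem_Ioc] at hk
    exact (hαpos k (by omega) hk.2).le
  have hBhnonneg : ∀ j, j ≤ N → 0 ≤ hS α j := by
    intro j hj
    rw [hS]
    apply Finset.sum_nonneg
    intro k hk
    rw [Finset.mem_Ioc] at hk
    exact (hαpos k hk.1 (le_trans hk.2 hj)).le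
  have hTpos : 0 < T := by
    rw [← htS0]; exact hApos 0 hN
  have hBhmono : ∀ i j, i ≤ j → j ≤ N → hS α i ≤ hS α j := by
    intro i j hij hj
    have h1 := Finset.sum_Ioc_consecutive α (Nat.zero_le i) hij
    have h2 : 0 ≤ ∑ k ∈ Finset.Ioc i j, α k := by
      apply Finset.sum_nonneg
      intro k hk
      rw [Finset.mem_Ioc] at hk
      exact (hαpos k (by omega) (le_trans hk.2 hj)).le
    rw [hS, hS]
    rw [← h1]
    linarith
  have hAmono : ∀ i j, i ≤ j → j ≤ N → tS α N j ≤ tS α N i := by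
    intro i j hij hj
    have h1 := Finset.sum_Ioc_consecutive α hij hj
    have h2 : 0 ≤ ∑ k ∈ Finset.Ioc i j, α k := by
      apply Finset.sum_nonneg
      intro k hk
      rw [Finset.mem_Ioc] at hk
      exact (hαpos k (by omega) (le_trans hk.2 hj)).le
    rw [tS, tS, ← h1]
    linarith
  have hsep2' : hS α t ≤ tS α N t := by
    have h1 : Finset.Icc 1 (t + 1 - 1) = Finset.Ioc 0 t := by
      rw [Nat.add_sub_cancel, ← Finset.Icc_add_one_left_eq_Ioc]; rfl
    have h2 : Finset.Icc (t + 1) N = Finset.Ioc t N := Finset.Icc_add_one_left_eq_Ioc _ _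
    rw [hS, tS, ← h1, ← h2]
    exact hsep2
  have hsep1' : tS α N (t + 1) < hS α (t + 1) := by
    have h1 : Finset.Icc (t + 1 + 1) N = Finset.Ioc (t + 1) N := Finset.Icc_add_one_left_eq_Ioc _ _
    have h2 : Finset.Icc 1 (t + 1) = Finset.Ioc 0 (t + 1) := Finset.Icc_add_one_left_eq_Ioc _ _
    rw [hS, tS, ← h1, ← h2]
    exact hsep1
  -- vector facts
  have hxg : ∀ i, 1 ≤ i → i ≤ N → x (i - 1) - x i = α i • g i := by
    intro i h1 h2
    rw [hgdef]
    simp only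
    rw [smul_smul, mul_inv_cancel₀ (ne_of_gt (hαpos i h1 h2)), one_smul]
  have hsub : ∀ i, 1 ≤ i → i ≤ N → ∀ z,
      ⟪x (i - 1) - x i, z - x i⟫ ≤ α i * (f z - f (x i)) := by
    intro i h1 h2 z
    exact aux_subgrad hconv (hαpos i h1 h2) (hiter i (Finset.mem_Icc.mpr ⟨h1, h2⟩)) z
  have hFnonneg : ∀ z, 0 ≤ f z := fun z => h0 ▸ hmin z
  have hBineq : ∀ i, 1 ≤ i → i ≤ N → f (x i) ≤ ⟪x i, g i⟫ := by
    intro i h1 h2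
    have h := hsub i h1 h2 0
    rw [hxg i h1 h2, zero_sub, inner_neg_right, real_inner_smul_left, h0] at h
    have h' : α i * (-⟪g i, x i⟫) ≤ α i * (0 - f (x i)) := by linarith
    have h'' := le_of_mul_le_mul_left h' (hαpos i h1 h2)
    rw [real_inner_comm]
    linarith
  have hCineq : ∀ i, 1 ≤ i → i ≤ N → f (x i) + α i * ‖g i‖ ^ 2 ≤ f (x (i - 1)) := by
    intro i h1 h2
    have h := hsub i h1 h2 (x (i - 1))
    rw [hxg i h1 h2, real_inner_smul_left, real_inner_smul_right,
      real_inner_self_eq_norm_sq] at h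
    have h' : α i * (α i * ‖g i‖ ^ 2) ≤ α i * (f (x (i - 1)) - f (x i)) := by linarith
    have h'' := le_of_mul_le_mul_left h' (hαpos i h1 h2)
    linarith
  have hDineq : ∀ j, 1 ≤ j → j + 1 ≤ N →
      f (x j) ≤ f (x (j + 1)) + α (j + 1) * ⟪g j, g (j + 1)⟫ := by
    intro j h1 h2
    have h := hsub j h1 (by omega) (x (j + 1))
    have hx1 := hxg (j + 1) (by omega) h2
    simp only [Nat.add_sub_cancel] at hx1
    have hz : x (j + 1) - x j = -(α (j + 1) • g (j + 1)) := by rw [← hx1, neg_sub]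
    rw [hxg j h1 (by omega), hz, inner_neg_right, real_inner_smul_left,
      real_inner_smul_right] at h
    have h' : α j * (-(α (j + 1) * ⟪g j, g (j + 1)⟫)) ≤ α j * (f (x (j + 1)) - f (x j)) := by
      linarith
    have h'' := le_of_mul_le_mul_left h' (hαpos j h1 (by omega))
    linarith
  have hXexp : ∀ m, m + 1 ≤ N → ‖x m‖ ^ 2 = ‖x (m + 1)‖ ^ 2
      + 2 * (α (m + 1) * ⟪x (m + 1), g (m + 1)⟫) + α (m + 1) ^ 2 * ‖g (m + 1)‖ ^ 2 := by
    intro m hm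
    have hx1 := hxg (m + 1) (by omega) hm
    simp only [Nat.add_sub_cancel] at hx1
    have hx2 : x m = x (m + 1) + α (m + 1) • g (m + 1) := by rw [← hx1]; abel
    rw [hx2, norm_add_sq_real, real_inner_smul_right, norm_smul, Real.norm_eq_abs,
      mul_pow, sq_abs]
  have hsqx : ∀ m r, (0:ℝ) ≤ ‖x m‖ ^ 2 - 2 * (r * ⟪x m, g m⟫) + r ^ 2 * ‖g m‖ ^ 2 := by
    intro m r
    have h : (0:ℝ) ≤ ‖x m - r • g m‖ ^ 2 := sq_nonneg _
    rwa [norm_sub_sq_real, real_inner_smul_right, norm_smul, Real.norm_eq_abs,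
      mul_pow, sq_abs] at h
  have hsqg : ∀ j, (0:ℝ) ≤ ‖g j‖ ^ 2 - 2 * ⟪g j, g (j + 1)⟫ + ‖g (j + 1)‖ ^ 2 := by
    intro j
    have h : (0:ℝ) ≤ ‖g j - g (j + 1)‖ ^ 2 := sq_nonneg _
    rwa [norm_sub_sq_real] at h
  -- Phase 1 invariant
  have phase1 : ∀ m, m + 1 ≤ t + 1 →
      (T - 2 * hS α m) * T * ‖x m‖ ^ 2 + 2 * hS α m * tS α N m * T * f (x m)
        ≤ tS α N m ^ 2 := by
    intro m
    induction m with
    | zero =>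
      intro _
      rw [hhS0, htS0]
      have hx0sq : ‖x 0‖ ^ 2 ≤ 1 := by
        nlinarith [mul_le_mul hx0 hx0 (norm_nonneg (x 0)) zero_le_one]
      nlinarith [mul_le_mul_of_nonneg_left hx0sq (sq_nonneg T)]
    | succ m ih =>
      intro hms
      have ihm := ih (by omega)
      have hmN : m + 1 ≤ N := by omega
      have hm1N : m + 1 < N := by omega
      have hsm := hsum m (by omega)
      have hAm := hAsucc m (by omega)
      have hBm := hBsucc m
      have hXm := hXexp m hmN
      have hsB := hBineq (m + 1) (by omega) hmN
      have hsC := hCineq (m + 1) (by omega) hmN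
      simp only [Nat.add_sub_cancel] at hsC
      have hsq := hsqx (m + 1) (tS α N (m + 1))
      have hF := hFnonneg (x (m + 1))
      have hap : 0 < α (m + 1) := hαpos (m + 1) (by omega) hmN
      have hApp : 0 < tS α N (m + 1) := hApos (m + 1) hm1N
      have hBpn : 0 ≤ hS α m := hBhnonneg m (by omega)
      set a := α (m + 1) with hadef
      set Ap := tS α N (m + 1) with hApdef
      set Bp := hS α m with hBpdef
      set X := ‖x (m + 1)‖ ^ 2 with hXdef
      set P := ⟪x (m + 1), g (m + 1)⟫ with hPdef
      set G := ‖g (m + 1)‖ ^ 2 with hGdef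
      set Fv := f (x (m + 1)) with hFvdef
      set Fp := f (x m) with hFpdef
      clear_value a Ap Bp X P G Fv Fp
      have hTm : T = Bp + (a + Ap) := by linarith
      rw [hBm]
      rw [hAm, hXm] at ihm
      have key : (a + Ap) ^ 2 * ((T - 2 * (Bp + a)) * T * X + 2 * (Bp + a) * Ap * T * Fv)
          = Ap ^ 2 * ((T - 2 * Bp) * T * (X + 2 * (a * P) + a ^ 2 * G)
              + 2 * Bp * (a + Ap) * T * Fp)
            - 2 * a * T ^ 2 * (a + Ap) * Ap * (P - Fv)
            - 2 * Bp * T * (a + Ap) * Ap ^ 2 * (Fp - Fv - a * G)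
            - a * T * (T * a + 2 * Bp * Ap) * (X - 2 * (Ap * P) + Ap ^ 2 * G) := by
        rw [hTm]; ring
      have h1 : Ap ^ 2 * ((T - 2 * Bp) * T * (X + 2 * (a * P) + a ^ 2 * G)
            + 2 * Bp * (a + Ap) * T * Fp) ≤ Ap ^ 2 * (a + Ap) ^ 2 :=
        mul_le_mul_of_nonneg_left ihm (sq_nonneg Ap)
      have t1 : 0 ≤ 2 * a * T ^ 2 * (a + Ap) * Ap * (P - Fv) := by
        apply mul_nonneg
        · apply mul_nonneg
          apply mul_nonneg
          apply mul_nonneg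
          · linarith
          · exact sq_nonneg T
          · linarith
          · linarith
        · linarith
      have t2 : 0 ≤ 2 * Bp * T * (a + Ap) * Ap ^ 2 * (Fp - Fv - a * G) := by
        apply mul_nonneg
        · apply mul_nonneg
          apply mul_nonneg
          apply mul_nonneg
          · linarith
          · linarith
          · linarith
          · exact sq_nonneg Ap
        · linarith
      have t3 : 0 ≤ a * T * (T * a + 2 * Bp * Ap) * (X - 2 * (Ap * P) + Ap ^ 2 * G) := by
        apply mul_nonneg
        · apply mul_nonneg
          · apply mul_nonneg <;> linarith
          · have := mul_nonneg hTpos.le hap.le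
            have := mul_nonneg (mul_nonneg (by norm_num : (0:ℝ) ≤ 2) hBpn) hApp.le
            linarith
        · exact hsq
      have h2 : (a + Ap) ^ 2 * ((T - 2 * (Bp + a)) * T * X + 2 * (Bp + a) * Ap * T * Fv)
          ≤ (a + Ap) ^ 2 * (Ap ^ 2) := by
        rw [key]; linarith
      exact le_of_mul_le_mul_left h2 (by positivity)
  -- Phase 2 invariant
  have phase2 : ∀ j, t + 1 ≤ j → j ≤ N →
      (hS α j - tS α N j) * T * ‖g j‖ ^ 2 + 2 * T * f (x j) ≤ 1 := by
    intro j hj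
    induction j, hj using Nat.le_induction with
    | base =>
      intro htN
      -- transition from phase 1 at index t
      have prev := phase1 t (le_refl _)
      have hsm := hsum t (by omega)
      have hAm := hAsucc t (by omega)
      have hBm := hBsucc t
      have hXm := hXexp t htN
      have hsB := hBineq (t + 1) (by omega) htN
      have hsC := hCineq (t + 1) (by omega) htN
      simp only [Nat.add_sub_cancel] at hsC
      have hsq := hsqx (t + 1) (tS α N (t + 1))
      have hF := hFnonneg (x (t + 1))
      have hap : 0 < α (t + 1) := hαpos (t + 1) (by omega) htN
      have hApn : 0 ≤ tS α N (t + 1) := hAnonneg (t + 1)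
      have hBpn : 0 ≤ hS α t := hBhnonneg t (by omega)
      have hs2 := hsep2'
      set a := α (t + 1) with hadef
      set Ap := tS α N (t + 1) with hApdef
      set Bp := hS α t with hBpdef
      set X := ‖x (t + 1)‖ ^ 2 with hXdef
      set P := ⟪x (t + 1), g (t + 1)⟫ with hPdef
      set G := ‖g (t + 1)‖ ^ 2 with hGdef
      set Fv := f (x (t + 1)) with hFvdef
      set Fp := f (x t) with hFpdef
      clear_value a Ap Bp X P G Fv Fp
      have hTm : T = Bp + (a + Ap) := by linarith
      have hBA : Bp ≤ a + Ap := by linarith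
      rw [hBm]
      rw [hAm, hXm] at prev
      have key : (a + Ap) ^ 2 * ((Bp + a - Ap) * T * G + 2 * T * Fv)
          = ((T - 2 * Bp) * T * (X + 2 * (a * P) + a ^ 2 * G)
              + 2 * Bp * (a + Ap) * T * Fp)
            - 2 * ((a + Ap) - Bp) * (a + Ap) * T * (P - Fv)
            - 2 * Bp * (a + Ap) * T * (Fp - Fv - a * G)
            - ((a + Ap) - Bp) * T * (X - 2 * (Ap * P) + Ap ^ 2 * G) := by
        rw [hTm]; ring
      have u1 : 0 ≤ 2 * ((a + Ap) - Bp) * (a + Ap) * T * (P - Fv) := by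
        apply mul_nonneg
        · apply mul_nonneg
          apply mul_nonneg
          · linarith
          · linarith
          · linarith
        · linarith
      have u2 : 0 ≤ 2 * Bp * (a + Ap) * T * (Fp - Fv - a * G) := by
        apply mul_nonneg
        · apply mul_nonneg
          apply mul_nonneg
          · linarith
          · linarith
          · linarith
        · linarith
      have u3 : 0 ≤ ((a + Ap) - Bp) * T * (X - 2 * (Ap * P) + Ap ^ 2 * G) := by
        apply mul_nonneg
        · apply mul_nonneg <;> linarith
        · exact hsq
      have h2 : (a + Ap) ^ 2 * ((Bp + a - Ap) * T * G + 2 * T * Fv)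
          ≤ (a + Ap) ^ 2 * 1 := by
        rw [key, mul_one]; linarith
      exact le_of_mul_le_mul_left h2 (by positivity)
    | succ j hj ihj =>
      intro hj1N
      have prev := ihj (by omega)
      have hsm := hsum j (by omega)
      have hAj := hAsucc j (by omega)
      have hBj := hBsucc j
      have hsC := hCineq (j + 1) (by omega) hj1N
      simp only [Nat.add_sub_cancel] at hsC
      have hsD := hDineq j (by omega) hj1N
      have hsq := hsqg j
      have hap : 0 < α (j + 1) := hαpos (j + 1) (by omega) hj1N
      have hBs : hS α (t + 1) ≤ hS α j := hBhmono (t + 1) j hj (by omega)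
      have hAs : tS α N j ≤ tS α N (t + 1) := hAmono (t + 1) j hj (by omega)
      have hs1' := hsep1'
      set a := α (j + 1) with hadef
      set App := tS α N (j + 1) with hAppdef
      set B := hS α j with hBdef
      set G := ‖g j‖ ^ 2 with hGdef
      set G' := ‖g (j + 1)‖ ^ 2 with hG'def
      set H := ⟪g j, g (j + 1)⟫ with hHdef
      set Fv := f (x j) with hFvdef
      set F' := f (x (j + 1)) with hF'def
      clear_value a App B G G' H Fv F'
      have hTj : T = B + (a + App) := by linarith
      have hBA1 : a + App ≤ B := by linarith
      rw [hBj]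
      rw [hAj] at prev
      have key : a * ((B + a - App) * T * G' + 2 * T * F')
          = a * ((B - (a + App)) * T * G + 2 * T * Fv)
            - 2 * (B - App) * T * (Fv - F' - a * G')
            - 2 * (B - (a + App)) * T * (F' - Fv + a * H)
            - (B - (a + App)) * a * T * (G - 2 * H + G') := by
        rw [hTj]; ring
      have w1 : 0 ≤ 2 * (B - App) * T * (Fv - F' - a * G') := by
        apply mul_nonneg
        · apply mul_nonneg
          · linarith
          · linarith
        · linarith
      have w2 : 0 ≤ 2 * (B - (a + App)) * T * (F' - Fv + a * H) := by
        apply mul_nonneg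
        · apply mul_nonneg
          · linarith
          · linarith
        · linarith
      have w3 : 0 ≤ (B - (a + App)) * a * T * (G - 2 * H + G') := by
        apply mul_nonneg
        · apply mul_nonneg
          apply mul_nonneg
          · linarith
          · linarith
          · linarith
        · linarith
      have h2 : a * ((B + a - App) * T * G' + 2 * T * F') ≤ a * 1 := by
        rw [key]
        have : a * ((B - (a + App)) * T * G + 2 * T * Fv) ≤ a * 1 :=
          mul_le_mul_of_nonneg_left prev hap.le
        linarith
      exact le_of_mul_le_mul_left h2 hap
  -- conclude
  have final := phase2 N (by omega) (le_refl N)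
  have hSN : hS α N = T := by
    have := hsum N (le_refl N)
    rw [htSN] at this
    linarith
  rw [htSN, hSN] at final
  have hfN := hFnonneg (x N)
  have hgoal : ‖g N‖ ^ 2 ≤ 1 / T ^ 2 := by
    rw [le_div_iff₀ (by positivity)]
    nlinarith [final, mul_nonneg hTpos.le hfN]
  rw [hgdef] at hgoal
  simpa using hgoal
end

section
/- Let f be a proper closed convex function on ℝ, let α > 0 and c > 0, and suppose f(x) = c|x|. Then for any x ∈ ℝ, prox_{αf}(x) equals x − αc if x > αc, equals x + αc if x < −αc, and equals 0 if |x| ≤ αc (soft-thresholding). Consequently, starting from x_0 = −R with c = R/α_{1:N}, the PPA iterates are x_i = −R α_{i+1:N}/α_{1:N}. -/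
lemma min_unique (g : ℝ → ℝ) (t : ℝ) (hg : ∀ z, g t + (z - t) ^ 2 / 2 ≤ g z)
    (y : ℝ) (hy : IsMinOn g Set.univ y) : y = t := by
  have h1 : g y ≤ g t := isMinOn_iff.mp hy t (Set.mem_univ t)
  have h2 := hg y
  nlinarith [sq_nonneg (y - t)]

lemma prox_char (α c : ℝ) (hα : 0 < α) (hc : 0 < c) (x y : ℝ)
    (h : IsMinOn (fun z => α * (c * |z|) + (z - x) ^ 2 / 2) Set.univ y) :
    (α * c < x → y = x - α * c) ∧ (x < -(α * c) → y = x + α * c) ∧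
    (|x| ≤ α * c → y = 0) := by
  have hac : 0 < α * c := mul_pos hα hc
  refine ⟨fun hx => ?_, fun hx => ?_, fun hx => ?_⟩
  · apply min_unique _ _ _ _ h
    intro z
    have h1 : |x - α * c| = x - α * c := abs_of_pos (by linarith)
    rcases abs_cases z with ⟨hz, hz'⟩ | ⟨hz, hz'⟩ <;> simp only [h1, hz] <;> nlinarith
  · apply min_unique _ _ _ _ h
    intro z
    have h1 : |x + α * c| = -(x + α * c) := abs_of_neg (by linarith)
    rcases abs_cases z with ⟨hz, hz'⟩ | ⟨hz, hz'⟩ <;> simp only [h1, hz] <;> nlinarith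
  · apply min_unique _ _ _ _ h
    intro z
    have h2 : -(α * c) ≤ x := (abs_le.mp hx).1
    have h3 : x ≤ α * c := (abs_le.mp hx).2
    rcases abs_cases z with ⟨hz, hz'⟩ | ⟨hz, hz'⟩ <;> simp only [hz, abs_zero] <;> nlinarith

/-- Soft-thresholding: the proximal mapping of `f(x) = c|x|` with step `α`
is `x - αc` if `x > αc`, `x + αc` if `x < -αc`, and `0` if `|x| ≤ αc`.
Consequently, starting from `x_0 = -R` with `c = R/α_{1:N}`, the PPA iterates
are `x_i = -R α_{i+1:N}/α_{1:N}`. -/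
theorem stmt16 (α c : ℝ) (hα : 0 < α) (hc : 0 < c)
    (f : ℝ → ℝ) (hf : ∀ y, f y = c * |y|) :
    (∀ x y, IsMinOn (fun z => α * f z + (z - x) ^ 2 / 2) Set.univ y →
      (α * c < x → y = x - α * c) ∧
      (x < -(α * c) → y = x + α * c) ∧
      (|x| ≤ α * c → y = 0)) ∧
    (∀ (N : ℕ), 1 ≤ N → ∀ αs : ℕ → ℝ, (∀ i ∈ Finset.Icc 1 N, 0 < αs i) →
      ∀ R : ℝ, 0 < R → c = R / ∑ k ∈ Finset.Icc 1 N, αs k →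
      ∀ x : ℕ → ℝ, x 0 = -R →
      (∀ i ∈ Finset.Icc 1 N,
        IsMinOn (fun z => αs i * f z + (z - x (i - 1)) ^ 2 / 2) Set.univ (x i)) →
      ∀ i ≤ N, x i = -R * (∑ k ∈ Finset.Icc (i + 1) N, αs k) /
          ∑ k ∈ Finset.Icc 1 N, αs k) := by
  have hfe : f = fun z => c * |z| := funext hf
  subst hfe
  constructor
  · intro x y h
    exact prox_char α c hα hc x y h
  · intro N hN αs hαs R hR hcS x hx0 hmin
    set S := ∑ k ∈ Finset.Icc 1 N, αs k with hSdef
    have hS : 0 < S := Finset.sum_pos hαs ⟨1, by simp [hN]⟩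
    intro i
    induction i with
    | zero =>
      intro _
      have : ∑ k ∈ Finset.Icc (0 + 1) N, αs k = S := by simp [hSdef]
      rw [this, hx0]
      field_simp
    | succ i ih =>
      intro hiN
      have hi' : i ≤ N := Nat.le_of_succ_le hiN
      have hxi := ih hi'
      have hmem : i + 1 ∈ Finset.Icc 1 N := by simp [hiN]
      have hsplit : Finset.Icc (i + 1) N = insert (i + 1) (Finset.Icc (i + 2) N) := by
        ext k; simp [Finset.mem_Icc, Finset.mem_insert]; omega
      have hnotmem : i + 1 ∉ Finset.Icc (i + 2) N := by simp
      have hsum : ∑ k ∈ Finset.Icc (i + 1) N, αs k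
          = αs (i + 1) + ∑ k ∈ Finset.Icc (i + 2) N, αs k := by
        rw [hsplit, Finset.sum_insert hnotmem]
      set T := ∑ k ∈ Finset.Icc (i + 2) N, αs k with hTdef
      have hT0 : 0 ≤ T := Finset.sum_nonneg fun k hk => by
        have : k ∈ Finset.Icc 1 N := by
          simp only [Finset.mem_Icc] at hk ⊢; omega
        exact (hαs k this).le
      have hαi : 0 < αs (i + 1) := hαs _ hmem
      have hminp := hmin (i + 1) hmem
      have hprev : x (i + 1 - 1) = -R * (αs (i + 1) + T) / S := by
        simp only [Nat.add_sub_cancel]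
        rw [hxi, hsum]
      rw [hprev] at hminp
      have hchar := prox_char (αs (i + 1)) c hαi hc _ _ hminp
      have hc' : c = R / S := hcS
      have hRS : R / S * S = R := div_mul_cancel₀ R hS.ne'
      have h2 : (αs (i + 1) * (R / S)) * S = αs (i + 1) * R := by
        rw [mul_assoc, hRS]
      rcases lt_or_eq_of_le hT0 with hTpos | hTzero
      · have hlt : -R * (αs (i + 1) + T) / S < -(αs (i + 1) * c) := by
          rw [hc', div_lt_iff₀ hS]
          nlinarith [mul_pos hR hTpos]
        have hxs := hchar.2.1 hlt
        rw [hxs, hc']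
        field_simp
        ring
      · have heq : -R * (αs (i + 1) + T) / S = -(αs (i + 1) * c) := by
          rw [hc', ← hTzero]
          field_simp
          ring
        have habs : |(-R * (αs (i + 1) + T) / S)| ≤ αs (i + 1) * c := by
          rw [heq, abs_neg, abs_of_pos (mul_pos hαi hc)]
        have hxs := hchar.2.2 habs
        rw [hxs, ← hTzero]
        simp
end

section
/- Let f be a proper closed convex function on ℝⁿ and let x_i = prox_{α_i f}(x_{i−1}) with α_i > 0. Then the sequence of subgradient norms is nonincreasing: ‖(x_i − x_{i+1})/α_{i+1}‖ ≤ ‖(x_{i−1} − x_i)/α_i‖ for all i, where (x_{i−1} − x_i)/α_i ∈ ∂f(x_i). -/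
open scoped RealInnerProductSpace

lemma subgrad_of_prox {n : ℕ} (f : EuclideanSpace ℝ (Fin n) → ℝ)
    (hconv : ConvexOn ℝ Set.univ f) (a : ℝ) (ha : 0 < a)
    (w y : EuclideanSpace ℝ (Fin n))
    (hmin : IsMinOn (fun z => a * f z + ‖z - w‖ ^ 2 / 2) Set.univ y) :
    SubgradAt f (a⁻¹ • (w - y)) y := by
  intro z
  have key : ⟪w - y, z - y⟫ - a * (f z - f y) ≤ 0 := by
    have hstep : ∀ t : ℝ, t ∈ Set.Ioo (0:ℝ) 1 →
        ⟪w - y, z - y⟫ - a * (f z - f y) ≤ t * (‖z - y‖ ^ 2 / 2) := by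
      intro t ht
      have ht0 : 0 < t := ht.1
      have ht1 : t < 1 := ht.2
      have hmin' := hmin (Set.mem_univ (y + t • (z - y)))
      simp only [Set.mem_setOf_eq] at hmin'
      have hfcomb : f (y + t • (z - y)) ≤ (1 - t) * f y + t * f z := by
        have := hconv.2 (Set.mem_univ y) (Set.mem_univ z)
          (by linarith : (0:ℝ) ≤ 1 - t) (le_of_lt ht0) (by ring)
        have hpt : (1 - t) • y + t • z = y + t • (z - y) := by
          module
        rw [hpt] at this
        simpa using this
      have hnorm : ‖y + t • (z - y) - w‖ ^ 2
          = ‖y - w‖ ^ 2 + 2 * (t * ⟪y - w, z - y⟫) + t ^ 2 * ‖z - y‖ ^ 2 := by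
        have h1 : y + t • (z - y) - w = (y - w) + t • (z - y) := by abel
        rw [h1, norm_add_sq_real, real_inner_smul_right, norm_smul]
        simp only [Real.norm_eq_abs, abs_of_pos ht0, mul_pow]
      have hinner : ⟪y - w, z - y⟫ = -⟪w - y, z - y⟫ := by
        rw [show y - w = -(w - y) by abel, inner_neg_left]
      have hmin2 : a * f y + ‖y - w‖ ^ 2 / 2
          ≤ a * ((1 - t) * f y + t * f z)
            + (‖y - w‖ ^ 2 + 2 * (t * ⟪y - w, z - y⟫) + t ^ 2 * ‖z - y‖ ^ 2) / 2 := by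
        calc a * f y + ‖y - w‖ ^ 2 / 2
            ≤ a * f (y + t • (z - y)) + ‖y + t • (z - y) - w‖ ^ 2 / 2 := hmin'
          _ ≤ _ := by
              rw [hnorm]
              have := mul_le_mul_of_nonneg_left hfcomb (le_of_lt ha)
              linarith
      rw [hinner] at hmin2
      have htineq : t * (⟪w - y, z - y⟫ - a * (f z - f y)) ≤ t * (t * (‖z - y‖ ^ 2 / 2)) := by
        nlinarith
      have := le_of_mul_le_mul_left htineq ht0
      linarith [this]
    have htend : Filter.Tendsto (fun t : ℝ => t * (‖z - y‖ ^ 2 / 2))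
        (nhdsWithin 0 (Set.Ioi 0)) (nhds 0) := by
      have h : Filter.Tendsto (fun t : ℝ => t * (‖z - y‖ ^ 2 / 2)) (nhds 0) (nhds 0) := by
        simpa using (continuous_mul_right (‖z - y‖ ^ 2 / 2)).tendsto (0:ℝ)
      exact h.mono_left nhdsWithin_le_nhds
    refine ge_of_tendsto htend ?_
    filter_upwards [Ioo_mem_nhdsGT_of_mem (by simp : (0:ℝ) ∈ Set.Ico (0:ℝ) 1)] with t ht
    exact hstep t ht
  have : ⟪a⁻¹ • (w - y), z - y⟫ = a⁻¹ * ⟪w - y, z - y⟫ := real_inner_smul_left _ _ _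
  rw [this]
  have ha' : 0 < a⁻¹ := inv_pos.mpr ha
  have : a⁻¹ * ⟪w - y, z - y⟫ ≤ f z - f y := by
    have h2 : ⟪w - y, z - y⟫ ≤ a * (f z - f y) := by linarith
    calc a⁻¹ * ⟪w - y, z - y⟫ ≤ a⁻¹ * (a * (f z - f y)) :=
          mul_le_mul_of_nonneg_left h2 (le_of_lt ha')
      _ = f z - f y := by field_simp
  linarith

/-- Along the PPA iterates the residual subgradient norms are nonincreasing:
`‖(x_i - x_{i+1})/α_{i+1}‖ ≤ ‖(x_{i-1} - x_i)/α_i‖`, where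
`(x_{i-1} - x_i)/α_i ∈ ∂f(x_i)`. -/
theorem stmt17 {n : ℕ} (f : EuclideanSpace ℝ (Fin n) → ℝ)
    (hconv : ConvexOn ℝ Set.univ f) (hlsc : LowerSemicontinuous f)
    (N : ℕ) (α : ℕ → ℝ) (hα : ∀ i ∈ Finset.Icc 1 N, 0 < α i)
    (x : ℕ → EuclideanSpace ℝ (Fin n))
    (hiter : ∀ i ∈ Finset.Icc 1 N,
      IsMinOn (fun z => α i * f z + ‖z - x (i - 1)‖ ^ 2 / 2) Set.univ (x i)) :
    ∀ i, 1 ≤ i → i + 1 ≤ N →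
      SubgradAt f ((α i)⁻¹ • (x (i - 1) - x i)) (x i) ∧
      ‖(α (i + 1))⁻¹ • (x i - x (i + 1))‖ ≤ ‖(α i)⁻¹ • (x (i - 1) - x i)‖ := by
  intro i hi1 hiN
  have hiIcc : i ∈ Finset.Icc 1 N := Finset.mem_Icc.mpr ⟨hi1, by omega⟩
  have hi1Icc : i + 1 ∈ Finset.Icc 1 N := Finset.mem_Icc.mpr ⟨by omega, hiN⟩
  have hai : 0 < α i := hα i hiIcc
  have hai1 : 0 < α (i + 1) := hα (i + 1) hi1Icc
  set g1 : EuclideanSpace ℝ (Fin n) := (α i)⁻¹ • (x (i - 1) - x i) with hg1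
  set g2 : EuclideanSpace ℝ (Fin n) := (α (i + 1))⁻¹ • (x i - x (i + 1)) with hg2
  have hs1 : SubgradAt f g1 (x i) :=
    subgrad_of_prox f hconv (α i) hai _ _ (hiter i hiIcc)
  have hs2 : SubgradAt f g2 (x (i + 1)) := by
    have := subgrad_of_prox f hconv (α (i + 1)) hai1 _ _ (hiter (i + 1) hi1Icc)
    simpa using this
  refine ⟨hs1, ?_⟩
  -- monotonicity of subdifferential
  have hmono : ⟪g2, x i - x (i + 1)⟫ ≤ ⟪g1, x i - x (i + 1)⟫ := by
    have h1 := hs1 (x (i + 1))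
    have h2 := hs2 (x i)
    have neg1 : ⟪g1, x (i + 1) - x i⟫ = -⟪g1, x i - x (i + 1)⟫ := by
      rw [← inner_neg_right]; congr 1; abel
    rw [neg1] at h1
    linarith
  have hxrel : x i - x (i + 1) = α (i + 1) • g2 := by
    rw [hg2, smul_smul, mul_inv_cancel₀ (ne_of_gt hai1), one_smul]
  have e1 : ⟪g1, x i - x (i + 1)⟫ = α (i + 1) * ⟪g1, g2⟫ := by
    rw [hxrel, real_inner_smul_right]
  have e2 : ⟪g2, x i - x (i + 1)⟫ = α (i + 1) * ‖g2‖ ^ 2 := by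
    rw [hxrel, real_inner_smul_right, real_inner_self_eq_norm_sq]
  have hkey : ‖g2‖ ^ 2 ≤ ⟪g1, g2⟫ := by
    rw [e1, e2] at hmono
    exact le_of_mul_le_mul_left hmono hai1
  have hcs : ⟪g1, g2⟫ ≤ ‖g1‖ * ‖g2‖ := real_inner_le_norm g1 g2
  nlinarith [norm_nonneg g1, norm_nonneg g2, sq_nonneg (‖g1‖ - ‖g2‖)]
end
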